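/- arXiv:2408.14041 — 5 statements merged into one kernel-verified Lean document; each statement's English description precedes it below -/
import Mathlib

section
/- For n ≥ 7, the three largest conjugacy classes of S_n are, in decreasing order of size: the class of permutations with cycle type consisting of one (n-1)-cycle and one fixed point (size n!/(n-1)), the class of n-cycles (size n!/n), and the class with cycle type consisting of one (n-3)-cycle, one 2-cycle, and one fixed point (size n!/(2(n-3))). -/
/-- The full cycle type of a permutation of `Fin n`: the multiset of cycle lengths,
including a part `1` for each fixed point. -/
def fullCycleType {n : ℕ} (σ : Equiv.Perm (Fin n)) : Multiset ℕ :=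
  σ.cycleType + Multiset.replicate (n - σ.cycleType.sum) 1

/-- The conjugacy class of `S_n` consisting of the permutations with the
given (full) cycle type. -/
def classOf (n : ℕ) (m : Multiset ℕ) : Set (Equiv.Perm (Fin n)) :=
  {σ | fullCycleType σ = m}



open Equiv Equiv.Perm Finset

namespace SAux

set_option linter.unusedSectionVars false

variable {α : Type*} [Fintype α] [DecidableEq α]

lemma stab_noncommProd {ι : Type*} (t : Finset ι) (F : ι → Perm α) (comm) (x : α)
    (h : ∀ i ∈ t, F i x = x) : t.noncommProd F comm x = x := by
  have := Submonoid.noncommProd_mem (MulAction.stabilizer (Perm α) x).toSubmonoid t F comm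
    (fun i hi => by simpa [MulAction.mem_stabilizer_iff, Perm.smul_def] using h i hi)
  simpa [MulAction.mem_stabilizer_iff, Perm.smul_def] using this

lemma disjoint_ofSubtype_fixed (σ : Perm α) (g : Perm {x // σ x = x}) :
    Perm.Disjoint (Perm.ofSubtype g) σ := by
  intro x
  by_cases h : σ x = x
  · exact Or.inr h
  · exact Or.inl (Perm.ofSubtype_apply_of_not_mem g h)

theorem le_card_commute (σ : Perm α) :
    σ.cycleType.prod * (Fintype.card α - σ.support.card).factorial
      ≤ Nat.card {τ : Perm α // Commute τ σ} := by
  classical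
  set s := σ.cycleFactorsFinset with hs
  have hcomm : ∀ (f : {c // c ∈ s} → ℕ),
      ((Finset.univ : Finset {c // c ∈ s}) : Set {c // c ∈ s}).Pairwise
        fun c d => Commute (c.1 ^ f c) (d.1 ^ f d) := by
    intro f c _ d _ hcd
    exact (σ.cycleFactorsFinset_mem_commute c.2 d.2 (fun h => hcd (Subtype.ext h))).pow_pow _ _
  set π : ({c // c ∈ s} → ℕ) → Perm α := fun f =>
    Finset.univ.noncommProd (fun c => c.1 ^ f c) (hcomm f) with hπ
  -- (1) π fixes the fixed points of σ
  have hfix : ∀ (f : {c // c ∈ s} → ℕ) (x : α), σ x = x → π f x = x := by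
    intro f x hx
    apply stab_noncommProd
    intro c _
    have hxs : x ∉ (c.1).support := fun hmem =>
      (Equiv.Perm.mem_support.1 ((mem_cycleFactorsFinset_support_le c.2) hmem)) hx
    have : x ∉ (c.1 ^ f c).support := fun hmem => hxs (support_pow_le c.1 (f c) hmem)
    simpa [Equiv.Perm.mem_support, not_not] using this
  -- (2) on the support of a factor c, π acts as c ^ f c
  have happ : ∀ (f : {c // c ∈ s} → ℕ) (c : {c // c ∈ s}) (x : α), x ∈ (c.1).support →
      π f x = (c.1 ^ f c) x := by
    intro f c x hx
    have hdecomp := Finset.noncommProd_erase_mul Finset.univ (Finset.mem_univ c)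
      (fun c => c.1 ^ f c) (hcomm f)
    rw [hπ]
    dsimp only
    rw [← hdecomp, Perm.mul_apply]
    apply stab_noncommProd
    intro d hd
    have hdc : d.1 ≠ c.1 := fun h => (Finset.mem_erase.1 hd).1 (Subtype.ext h)
    have hdisj : Perm.Disjoint c.1 d.1 :=
      σ.cycleFactorsFinset_pairwise_disjoint c.2 d.2 (fun h => hdc h.symm)
    have hmem : (c.1 ^ f c) x ∈ (c.1).support := by
      exact Equiv.Perm.pow_apply_mem_support.2 hx
    have : (c.1 ^ f c) x ∉ (d.1).support :=
      fun h => (Finset.disjoint_left.1 hdisj.disjoint_support) hmem h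
    have : (c.1 ^ f c) x ∉ (d.1 ^ f d).support := fun hm => this (support_pow_le d.1 (f d) hm)
    simpa [Equiv.Perm.mem_support, not_not] using this
  -- the injection
  set Φ : ((c : {c // c ∈ s}) → Fin (orderOf c.1)) × Perm {x // σ x = x} →
      {τ : Perm α // Commute τ σ} := fun fg =>
    ⟨π (fun c => (fg.1 c).1) * Perm.ofSubtype fg.2, by
      apply Commute.mul_left
      · apply Commute.symm
        apply Finset.noncommProd_commute
        intro c _
        exact ((self_mem_cycle_factors_commute c.2).symm).pow_right _
      · exact (disjoint_ofSubtype_fixed σ fg.2).commute⟩ with hΦ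
  have hinj : Function.Injective Φ := by
    intro ⟨f, g⟩ ⟨f', g'⟩ heq
    have heq' : π (fun c => (f c).1) * Perm.ofSubtype g
        = π (fun c => (f' c).1) * Perm.ofSubtype g' := congrArg Subtype.val heq
    -- the `ofSubtype` parts agree
    have hg : Perm.ofSubtype g = Perm.ofSubtype g' := by
      ext x
      by_cases hx : σ x = x
      · have h1 : ∀ (g : Perm {x // σ x = x}),
            (π (fun c => ((f c).1)) * Perm.ofSubtype g) x = Perm.ofSubtype g x := by
          intro g
          rw [Perm.mul_apply]
          apply hfix
          rw [Perm.ofSubtype_apply_of_mem g hx]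
          exact (g ⟨x, hx⟩).2
        have h1' : (π (fun c => ((f' c).1)) * Perm.ofSubtype g') x = Perm.ofSubtype g' x := by
          rw [Perm.mul_apply]
          apply hfix
          rw [Perm.ofSubtype_apply_of_mem g' hx]
          exact (g' ⟨x, hx⟩).2
        rw [← h1 g, heq', h1']
      · rw [Perm.ofSubtype_apply_of_not_mem g hx, Perm.ofSubtype_apply_of_not_mem g' hx]
    have hgg : g = g' := by
      ext x
      have := congrArg (fun p => p.toFun x.1) hg
      simpa [Perm.ofSubtype_apply_of_mem g x.2, Perm.ofSubtype_apply_of_mem g' x.2] using this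
    have hππ : π (fun c => (f c).1) = π (fun c => (f' c).1) := by
      rw [hg] at heq'
      exact mul_right_cancel heq'
    have hff : f = f' := by
      funext c
      have hcyc : (c.1).IsCycle := (mem_cycleFactorsFinset_iff.1 c.2).1
      have hposupp : (c.1).support.Nonempty := by
        rcases hcyc with ⟨x, hx, -⟩
        exact ⟨x, Equiv.Perm.mem_support.2 hx⟩
      have hpow : c.1 ^ ((f c) : ℕ) = c.1 ^ ((f' c) : ℕ) := by
        ext y
        by_cases hy : y ∈ (c.1).support
        · rw [← happ (fun c => (f c).1) c y hy, ← happ (fun c => (f' c).1) c y hy, hππ]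
        · have h1 : y ∉ (c.1 ^ ((f c) : ℕ)).support := fun hm => hy (support_pow_le _ _ hm)
          have h2 : y ∉ (c.1 ^ ((f' c) : ℕ)).support := fun hm => hy (support_pow_le _ _ hm)
          rw [Equiv.Perm.notMem_support] at h1 h2
          rw [h1, h2]
      have := pow_injOn_Iio_orderOf (x := c.1)
        (Set.mem_Iio.2 (f c).2) (Set.mem_Iio.2 (f' c).2) hpow
      exact Fin.ext this
    rw [Prod.ext_iff]; exact ⟨hff, hgg⟩
  have hcard := Nat.card_le_card_of_injective Φ hinj
  rw [Nat.card_eq_fintype_card (α := ((c : {c // c ∈ s}) → Fin (orderOf c.1)) × Perm {x // σ x = x})] at hcard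
  refine le_trans (le_of_eq ?_) hcard
  rw [Fintype.card_prod, Fintype.card_pi]
  congr 1
  · simp only [Fintype.card_fin]
    rw [Finset.prod_coe_sort s (fun c => orderOf c)]
    have h1 : ∀ c ∈ s, orderOf c = c.support.card := fun c hc =>
      ((mem_cycleFactorsFinset_iff.1 hc).1).orderOf
    rw [Finset.prod_congr rfl h1]
    rw [cycleType_def]
    rfl
  · rw [Fintype.card_perm]
    congr 1
    have e : {x // σ x = x} ≃ {x // x ∉ σ.support} :=
      Equiv.subtypeEquivRight (by intro x; simp [Equiv.Perm.mem_support, not_not])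
    rw [Fintype.card_congr e, Fintype.card_subtype_compl, Fintype.card_coe]

end SAux

open Equiv Equiv.Perm Finset

namespace SAux

set_option linter.unusedSectionVars false

variable {α : Type*} [Fintype α] [DecidableEq α]

theorem class_card_mul (σ : Perm α) :
    Set.ncard {τ : Perm α | τ.cycleType = σ.cycleType} * Nat.card {τ : Perm α // Commute τ σ}
      = (Fintype.card α).factorial := by
  classical
  have hset : {τ : Perm α | τ.cycleType = σ.cycleType}
      = MulAction.orbit (ConjAct (Perm α)) σ := by
    ext τ
    rw [Set.mem_setOf_eq, ConjAct.mem_orbit_conjAct, isConj_iff_cycleType_eq]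
  have e2 : MulAction.stabilizer (ConjAct (Perm α)) σ ≃ {τ : Perm α // Commute τ σ} :=
    { toFun := fun k => ⟨ConjAct.ofConjAct k.1, by
        have := k.2
        rw [MulAction.mem_stabilizer_iff, ConjAct.smul_def] at this
        exact mul_inv_eq_iff_eq_mul.mp this⟩
      invFun := fun τ => ⟨ConjAct.toConjAct τ.1, by
        rw [MulAction.mem_stabilizer_iff, ConjAct.smul_def, ConjAct.ofConjAct_toConjAct]
        exact mul_inv_eq_iff_eq_mul.mpr τ.2⟩
      left_inv := fun k => Subtype.ext (by simp)
      right_inv := fun τ => Subtype.ext (by simp) }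
  have key := Nat.card_congr (MulAction.orbitProdStabilizerEquivGroup (ConjAct (Perm α)) σ)
  rw [Nat.card_prod, Nat.card_congr e2] at key
  rw [hset, ← Nat.card_coe_set_eq]
  rw [key, Nat.card_congr ConjAct.ofConjAct.toEquiv, Nat.card_eq_fintype_card,
    Fintype.card_perm]

end SAux

open Equiv Equiv.Perm Finset

namespace SAux

set_option linter.unusedSectionVars false
set_option maxHeartbeats 1000000

variable {α : Type*} [Fintype α] [DecidableEq α]

lemma commute_eq_of_sameCycle {σ τ τ' : Perm α} (hτ : Commute τ σ) (hτ' : Commute τ' σ)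
    {x y : α} (h : σ.SameCycle x y) (hxy : τ x = τ' x) : τ y = τ' y := by
  obtain ⟨i, rfl⟩ := h
  calc τ ((σ ^ i) x) = (σ ^ i) (τ x) := by
        rw [← Perm.mul_apply, ← Perm.mul_apply, (hτ.zpow_right i).eq]
    _ = (σ ^ i) (τ' x) := by rw [hxy]
    _ = τ' ((σ ^ i) x) := by
        rw [← Perm.mul_apply, ← Perm.mul_apply, (hτ'.zpow_right i).eq]

lemma commute_fixed {σ τ : Perm α} (hτ : Commute τ σ) {x : α} (hx : σ x = x) :
    σ (τ x) = τ x := by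
  have : (σ * τ) x = (τ * σ) x := by rw [hτ.eq]
  simpa [Perm.mul_apply, hx] using this

lemma commute_mem_support {σ τ : Perm α} (hτ : Commute τ σ) {x : α}
    (hx : x ∈ σ.support) : τ x ∈ σ.support := by
  rw [Equiv.Perm.mem_support] at hx ⊢
  have : (σ * τ) x = (τ * σ) x := by rw [hτ.eq]
  rw [Perm.mul_apply, Perm.mul_apply] at this
  rw [this]
  exact fun h => hx (τ.injective h)

lemma fixed_unique {σ : Perm α} (hcard : σ.support.card = Fintype.card α - 1)
    {x y : α} (hx : σ x = x) (hy : σ y = y) : x = y := by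
  have h1 : σ.supportᶜ.card = 1 := by
    rw [Finset.card_compl, hcard]
    have : 1 ≤ Fintype.card α := by
      rcases Nat.eq_zero_or_pos (Fintype.card α) with h | h
      · exact absurd (Fintype.card_eq_zero_iff.mp h).elim' (fun f => f x)
      · exact h
    omega
  have hxc : x ∈ σ.supportᶜ := by simp [Equiv.Perm.mem_support, hx]
  have hyc : y ∈ σ.supportᶜ := by simp [Equiv.Perm.mem_support, hy]
  exact Finset.card_le_one.mp (le_of_eq h1) _ hxc _ hyc

theorem card_commute_le_top (σ : Perm α) (h : σ.cycleType = {Fintype.card α})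
    (h0 : 0 < Fintype.card α) :
    Nat.card {τ : Perm α // Commute τ σ} ≤ Fintype.card α := by
  have hcyc : σ.IsCycle := by
    rw [← card_cycleType_eq_one, h, Multiset.card_singleton]
  have hsupp : σ.support.card = Fintype.card α := by
    rw [← sum_cycleType, h, Multiset.sum_singleton]
  have huniv : σ.support = Finset.univ := Finset.eq_univ_of_card _ (by rw [hsupp, Fintype.card])
  have : Nonempty α := Fintype.card_pos_iff.mp h0
  let x₀ : α := Classical.arbitrary α
  have key : Function.Injective (fun τ : {τ : Perm α // Commute τ σ} => τ.1 x₀) := by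
    intro τ τ' hxy
    ext y : 2
    have hsc : σ.SameCycle x₀ y := by
      apply hcyc.sameCycle
      · rw [← Equiv.Perm.mem_support, huniv]; exact Finset.mem_univ _
      · rw [← Equiv.Perm.mem_support, huniv]; exact Finset.mem_univ _
    exact commute_eq_of_sameCycle τ.2 τ'.2 hsc hxy
  calc Nat.card {τ : Perm α // Commute τ σ} ≤ Nat.card α := Nat.card_le_card_of_injective _ key
    _ = Fintype.card α := Nat.card_eq_fintype_card

theorem card_commute_le_sub_one (σ : Perm α) (h : σ.cycleType = {Fintype.card α - 1})
    (h2 : 2 ≤ Fintype.card α) :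
    Nat.card {τ : Perm α // Commute τ σ} ≤ Fintype.card α - 1 := by
  have hcyc : σ.IsCycle := by
    rw [← card_cycleType_eq_one, h, Multiset.card_singleton]
  have hsupp : σ.support.card = Fintype.card α - 1 := by
    rw [← sum_cycleType, h, Multiset.sum_singleton]
  obtain ⟨x₀, hx₀⟩ : σ.support.Nonempty := by
    rw [← Finset.card_pos, hsupp]; omega
  have key : Function.Injective (fun τ : {τ : Perm α // Commute τ σ} =>
      (⟨τ.1 x₀, commute_mem_support τ.2 hx₀⟩ : {x // x ∈ σ.support})) := by
    intro τ τ' hxy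
    have hxy' : τ.1 x₀ = τ'.1 x₀ := congrArg Subtype.val hxy
    ext y : 2
    by_cases hy : y ∈ σ.support
    · exact commute_eq_of_sameCycle τ.2 τ'.2
        (hcyc.sameCycle (Equiv.Perm.mem_support.1 hx₀) (Equiv.Perm.mem_support.1 hy)) hxy'
    · rw [Equiv.Perm.notMem_support] at hy
      have h1 : τ.1 y = y := fixed_unique hsupp (commute_fixed τ.2 hy) hy
      have h2 : τ'.1 y = y := fixed_unique hsupp (commute_fixed τ'.2 hy) hy
      rw [h1, h2]
  calc Nat.card {τ : Perm α // Commute τ σ} ≤ Nat.card {x // x ∈ σ.support} :=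
        Nat.card_le_card_of_injective _ key
    _ = σ.support.card := by rw [Nat.card_eq_fintype_card, Fintype.card_coe]
    _ = Fintype.card α - 1 := hsupp

end SAux

namespace SAux2
open SAux
variable {α : Type*} [Fintype α] [DecidableEq α]

theorem card_commute_le_pair (σ : Equiv.Perm α) (h : σ.cycleType = {Fintype.card α - 3, 2})
    (h7 : 7 ≤ Fintype.card α) :
    Nat.card {τ : Equiv.Perm α // Commute τ σ} ≤ (Fintype.card α - 3) * 2 := by
  set n := Fintype.card α with hn
  have hsupp : σ.support.card = n - 1 := by
    rw [← sum_cycleType, h]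
    simp only [Multiset.insert_eq_cons, Multiset.sum_cons, Multiset.sum_singleton]
    omega
  have hmap : σ.cycleFactorsFinset.val.map (Finset.card ∘ Equiv.Perm.support) = {n - 3, 2} := by
    rw [← cycleType_def, h]
  have hc : ∃ c ∈ σ.cycleFactorsFinset, c.support.card = n - 3 := by
    have hmem : (n - 3) ∈ σ.cycleFactorsFinset.val.map (Finset.card ∘ Equiv.Perm.support) := by
      rw [hmap]; simp
    obtain ⟨c, hc1, hc2⟩ := Multiset.mem_map.mp hmem
    exact ⟨c, hc1, hc2⟩
  have ht : ∃ t ∈ σ.cycleFactorsFinset, t.support.card = 2 := by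
    have hmem : 2 ∈ σ.cycleFactorsFinset.val.map (Finset.card ∘ Equiv.Perm.support) := by
      rw [hmap]; simp
    obtain ⟨t, ht1, ht2⟩ := Multiset.mem_map.mp hmem
    exact ⟨t, ht1, ht2⟩
  obtain ⟨c, hcmem, hcard_c⟩ := hc
  obtain ⟨t, htmem, hcard_t⟩ := ht
  have hct : c ≠ t := fun heq => by rw [heq, hcard_t] at hcard_c; omega
  have hfactors : σ.cycleFactorsFinset = {c, t} := by
    refine (Finset.eq_of_subset_of_card_le ?_ ?_).symm
    · intro z hz
      rcases Finset.mem_insert.mp hz with h1 | h1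
      · rwa [h1]
      · rw [Finset.mem_singleton.mp h1]; exact htmem
    · have h1 : σ.cycleFactorsFinset.card = 2 := by
        have := congrArg Multiset.card hmap
        rw [Multiset.card_map] at this
        rw [Finset.card_def, this]
        rfl
      rw [h1, Finset.card_insert_of_notMem (by simpa using hct), Finset.card_singleton]
  have hunion : ∀ x ∈ σ.support, x ∈ c.support ∨ x ∈ t.support := by
    intro x hx
    have h1 : σ.cycleOf x ∈ σ.cycleFactorsFinset := cycleOf_mem_cycleFactorsFinset_iff.mpr hx
    have h2 : x ∈ (σ.cycleOf x).support :=
      mem_support_cycleOf_iff.mpr ⟨Equiv.Perm.SameCycle.refl _ _, hx⟩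
    rw [hfactors, Finset.mem_insert, Finset.mem_singleton] at h1
    rcases h1 with h1 | h1
    · left; rwa [← h1]
    · right; rwa [← h1]
  have hcycle_c : σ.IsCycleOn c.support := isCycleOn_support_of_mem_cycleFactorsFinset hcmem
  have hcycle_t : σ.IsCycleOn t.support := isCycleOn_support_of_mem_cycleFactorsFinset htmem
  have hfix_t : ∀ z ∈ t.support, (σ ^ 2) z = z := fun z hz =>
    (hcycle_t.pow_apply_eq hz).mpr (by rw [hcard_t])
  have hnfix_c : ∀ z ∈ c.support, (σ ^ 2) z ≠ z := by
    intro z hz h'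
    have hd := (hcycle_c.pow_apply_eq hz).mp h'
    rw [hcard_c] at hd
    have := Nat.le_of_dvd two_pos hd
    omega
  have hcomm2 : ∀ (τ : Equiv.Perm α), Commute τ σ → ∀ x : α, (σ ^ 2) (τ x) = τ ((σ ^ 2) x) := by
    intro τ hτ x
    have := (hτ.pow_right 2).eq
    calc (σ ^ 2) (τ x) = (σ ^ 2 * τ) x := rfl
      _ = (τ * σ ^ 2) x := by rw [this]
      _ = τ ((σ ^ 2) x) := rfl
  have hmem_c : ∀ (τ : Equiv.Perm α), Commute τ σ → ∀ x ∈ c.support, τ x ∈ c.support := by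
    intro τ hτ x hx
    have hxs : x ∈ σ.support := mem_cycleFactorsFinset_support_le hcmem hx
    have h1 : τ x ∈ σ.support := commute_mem_support hτ hxs
    rcases hunion _ h1 with h2 | h2
    · exact h2
    · exfalso
      have e1 : (σ ^ 2) (τ x) = τ x := hfix_t _ h2
      have e2 := hcomm2 τ hτ x
      exact hnfix_c x hx (τ.injective (by rw [← e2, e1]))
  have hmem_t : ∀ (τ : Equiv.Perm α), Commute τ σ → ∀ x ∈ t.support, τ x ∈ t.support := by
    intro τ hτ x hx
    have hxs : x ∈ σ.support := mem_cycleFactorsFinset_support_le htmem hx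
    have h1 : τ x ∈ σ.support := commute_mem_support hτ hxs
    rcases hunion _ h1 with h2 | h2
    · exfalso
      have e1 : (σ ^ 2) (τ x) = τ ((σ ^ 2) x) := hcomm2 τ hτ x
      rw [hfix_t _ hx] at e1
      exact hnfix_c _ h2 e1
    · exact h2
  have hsc : ∀ d ∈ σ.cycleFactorsFinset, ∀ x ∈ d.support, ∀ y ∈ d.support,
      σ.SameCycle x y := by
    intro d hd x hx y hy
    have h1 : d = σ.cycleOf x := (eq_cycleOf_of_mem_cycleFactorsFinset_iff σ d hd x).mpr hx
    rw [h1] at hy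
    exact (mem_support_cycleOf_iff.mp hy).1
  obtain ⟨x₀, hx₀⟩ : c.support.Nonempty := by rw [← Finset.card_pos, hcard_c]; omega
  obtain ⟨y₀, hy₀⟩ : t.support.Nonempty := by rw [← Finset.card_pos, hcard_t]; omega
  have key : Function.Injective (fun τ : {τ : Equiv.Perm α // Commute τ σ} =>
      ((⟨τ.1 x₀, hmem_c _ τ.2 _ hx₀⟩, ⟨τ.1 y₀, hmem_t _ τ.2 _ hy₀⟩) :
        {x // x ∈ c.support} × {x // x ∈ t.support})) := by
    intro τ τ' hxy
    rw [Prod.ext_iff] at hxy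
    have h1 : τ.1 x₀ = τ'.1 x₀ := congrArg Subtype.val hxy.1
    have h2 : τ.1 y₀ = τ'.1 y₀ := congrArg Subtype.val hxy.2
    ext y : 2
    by_cases hy : y ∈ σ.support
    · rcases hunion y hy with h3 | h3
      · exact commute_eq_of_sameCycle τ.2 τ'.2 (hsc c hcmem x₀ hx₀ y h3) h1
      · exact commute_eq_of_sameCycle τ.2 τ'.2 (hsc t htmem y₀ hy₀ y h3) h2
    · rw [Equiv.Perm.notMem_support] at hy
      rw [fixed_unique hsupp (commute_fixed τ.2 hy) hy,
        fixed_unique hsupp (commute_fixed τ'.2 hy) hy]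
  calc Nat.card {τ : Equiv.Perm α // Commute τ σ}
      ≤ Nat.card ({x // x ∈ c.support} × {x // x ∈ t.support}) :=
        Nat.card_le_card_of_injective _ key
    _ = (n - 3) * 2 := by
        rw [Nat.card_eq_fintype_card, Fintype.card_prod, Fintype.card_coe, Fintype.card_coe,
          hcard_c, hcard_t]

end SAux2

namespace SAux

lemma prod_ge (M : Multiset ℕ) : (∀ x ∈ M, 2 ≤ x) → 2 ≤ Multiset.card M →
    2 * M.sum ≤ M.prod + 4 := by
  induction M using Multiset.induction_on with
  | empty => intro _ h; simp at h
  | cons a s IH =>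
    intro h2 hcard
    have ha : 2 ≤ a := h2 a (Multiset.mem_cons_self a s)
    have hs2 : ∀ x ∈ s, 2 ≤ x := fun x hx => h2 x (Multiset.mem_cons_of_mem hx)
    rcases Nat.lt_or_ge (Multiset.card s) 2 with hc | hc
    · -- card s ≤ 1
      rcases Nat.eq_zero_or_pos (Multiset.card s) with hc0 | hc1
      · -- s = 0 : single element, card total = 1 < 2 contradiction? no: card hyp was on cons
        exfalso
        rw [Multiset.card_cons, hc0] at hcard
        omega
      · have hc1' : Multiset.card s = 1 := by omega
        obtain ⟨b, rfl⟩ := Multiset.card_eq_one.mp hc1'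
        have hb : 2 ≤ b := hs2 b (Multiset.mem_singleton_self b)
        simp only [Multiset.sum_cons, Multiset.sum_singleton, Multiset.prod_cons,
          Multiset.prod_singleton]
        zify
        nlinarith [mul_nonneg (by omega : (0:ℤ) ≤ (a:ℤ) - 2) (by omega : (0:ℤ) ≤ (b:ℤ) - 2)]
    · have IH' := IH hs2 hc
      have hs4 : 4 ≤ s.sum := by
        have h5 := Multiset.card_nsmul_le_sum hs2
        rw [smul_eq_mul] at h5
        nlinarith
      simp only [Multiset.sum_cons, Multiset.prod_cons]
      set p := s.prod with hp
      set q := s.sum with hq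
      zify at IH' ⊢
      nlinarith [mul_nonneg (by omega : (0:ℤ) ≤ (a:ℤ) - 2)
          (by linarith : (0:ℤ) ≤ (p:ℤ) - 2*(q:ℤ) + 4),
        mul_nonneg (by omega : (0:ℤ) ≤ (a:ℤ) - 2) (by linarith : (0:ℤ) ≤ (q:ℤ) - 4)]

lemma comb_bound {M : Multiset ℕ} (hM : ∀ x ∈ M, 2 ≤ x) {n v : ℕ} (hn : 7 ≤ n)
    (hsum : M.sum + v = n) (h1 : M ≠ {n}) (h2 : M ≠ {n - 1}) :
    2 * n ≤ M.prod * v.factorial + 6 := by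
  have hvf : v ≤ v.factorial := Nat.self_le_factorial v
  have hvf1 : 1 ≤ v.factorial := Nat.one_le_iff_ne_zero.mpr (Nat.factorial_ne_zero v)
  rcases Nat.lt_or_ge (Multiset.card M) 2 with hc | hc
  · rcases Nat.eq_zero_or_pos (Multiset.card M) with hc0 | hc1
    · rw [Multiset.card_eq_zero] at hc0
      subst hc0
      simp only [Multiset.sum_zero, Multiset.prod_zero, one_mul] at *
      subst hsum
      -- 2 * v ≤ v! + 6, v = n ≥ 7
      obtain ⟨m, rfl⟩ : ∃ m, v = m + 1 := ⟨v - 1, by omega⟩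
      rw [Nat.factorial_succ]
      have hm : 2 ≤ m.factorial := le_trans (by omega) (Nat.self_le_factorial m)
      nlinarith
    · have hc1' : Multiset.card M = 1 := by omega
      obtain ⟨ℓ, rfl⟩ := Multiset.card_eq_one.mp hc1'
      have hℓ : 2 ≤ ℓ := hM ℓ (Multiset.mem_singleton_self ℓ)
      simp only [Multiset.sum_singleton, Multiset.prod_singleton] at *
      have hv1 : ℓ ≠ n := fun h => h1 (by rw [h])
      have hv2 : ℓ ≠ n - 1 := fun h => h2 (by rw [h])
      have hv : 2 ≤ v := by omega
      have hvf2 : 2 ≤ v.factorial := le_trans hv hvf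
      zify
      nlinarith [mul_nonneg (by omega : (0:ℤ) ≤ (ℓ:ℤ) - 2)
          (by omega : (0:ℤ) ≤ (v.factorial:ℤ) - 2),
        (by omega : (0:ℤ) ≤ (v.factorial:ℤ) - (v:ℤ))]
  · have hpge := prod_ge M hM hc
    have hs4 : 4 ≤ M.sum := by
      have h5 := Multiset.card_nsmul_le_sum hM
      rw [smul_eq_mul] at h5
      nlinarith
    set p := M.prod with hp
    set q := M.sum with hq
    zify at hpge ⊢
    nlinarith [mul_nonneg (by linarith : (0:ℤ) ≤ (p:ℤ) - 2*(q:ℤ) + 4)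
        (by omega : (0:ℤ) ≤ (v.factorial:ℤ) - 1),
      mul_nonneg (by omega : (0:ℤ) ≤ (q:ℤ) - 4)
        (by omega : (0:ℤ) ≤ (v.factorial:ℤ) - 1),
      (by omega : (0:ℤ) ≤ (v.factorial:ℤ) - (v:ℤ))]

end SAux

namespace SAux

open Equiv Equiv.Perm

lemma filter_not_replicate {m : Multiset ℕ} (hpos : ∀ k ∈ m, 1 ≤ k) :
    m.filter (fun k => ¬ 2 ≤ k)
      = Multiset.replicate (Multiset.card (m.filter (fun k => ¬ 2 ≤ k))) 1 := by
  rw [Multiset.eq_replicate_card]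
  intro b hb
  have h1 := Multiset.of_mem_filter hb
  have h2 := hpos b (Multiset.mem_of_mem_filter hb)
  omega

lemma sum_filter_aux {n : ℕ} {m : Multiset ℕ} (hsum : m.sum = n) (hpos : ∀ k ∈ m, 1 ≤ k) :
    (m.filter (fun k => 2 ≤ k)).sum + Multiset.card (m.filter (fun k => ¬ 2 ≤ k)) = n := by
  have hsplit := Multiset.filter_add_not (fun k => 2 ≤ k) m
  have h1 : (m.filter (fun k => 2 ≤ k)).sum + (m.filter (fun k => ¬ 2 ≤ k)).sum = n := by
    rw [← Multiset.sum_add, hsplit, hsum]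
  have h2 : (m.filter (fun k => ¬ 2 ≤ k)).sum
      = Multiset.card (m.filter (fun k => ¬ 2 ≤ k)) := by
    conv_lhs => rw [filter_not_replicate hpos]
    rw [Multiset.sum_replicate, smul_eq_mul, mul_one]
  omega

lemma fullCycleType_eq_iff {n : ℕ} {σ : Equiv.Perm (Fin n)} {m : Multiset ℕ}
    (hsum : m.sum = n) (hpos : ∀ k ∈ m, 1 ≤ k) :
    fullCycleType σ = m ↔ σ.cycleType = m.filter (fun k => 2 ≤ k) := by
  have hsplit := Multiset.filter_add_not (fun k => 2 ≤ k) m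
  constructor
  · intro h
    have h2 := congrArg (Multiset.filter (fun k => 2 ≤ k)) h
    rw [fullCycleType, Multiset.filter_add] at h2
    rw [Multiset.filter_eq_self.mpr (fun a ha => two_le_of_mem_cycleType ha)] at h2
    rw [Multiset.filter_eq_nil.mpr (fun a ha => by
      have := Multiset.eq_of_mem_replicate ha; omega)] at h2
    rw [add_zero] at h2
    exact h2
  · intro h
    rw [fullCycleType, h]
    have haux := sum_filter_aux hsum hpos
    have hcount : n - (m.filter (fun k => 2 ≤ k)).sum
        = Multiset.card (m.filter (fun k => ¬ 2 ≤ k)) := by omega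
    rw [hcount, ← filter_not_replicate hpos, hsplit]

lemma class_card_key {n : ℕ} {m : Multiset ℕ} (hsum : m.sum = n) (hpos : ∀ k ∈ m, 1 ≤ k)
    {σ₀ : Equiv.Perm (Fin n)} (hσ₀ : σ₀.cycleType = m.filter (fun k => 2 ≤ k)) :
    Set.ncard (classOf n m) * Nat.card {τ : Equiv.Perm (Fin n) // Commute τ σ₀}
      = n.factorial := by
  have h1 : classOf n m = {τ : Equiv.Perm (Fin n) | τ.cycleType = σ₀.cycleType} := by
    ext τ
    rw [classOf, Set.mem_setOf_eq, Set.mem_setOf_eq, hσ₀]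
    exact fullCycleType_eq_iff hsum hpos
  rw [h1]
  have h2 := class_card_mul σ₀
  rwa [Fintype.card_fin] at h2

lemma centralizer_lower {n : ℕ} (σ₀ : Equiv.Perm (Fin n)) :
    σ₀.cycleType.prod * (n - σ₀.cycleType.sum).factorial
      ≤ Nat.card {τ : Equiv.Perm (Fin n) // Commute τ σ₀} := by
  have h := le_card_commute σ₀
  rwa [Fintype.card_fin, ← sum_cycleType] at h

end SAux

open SAux SAux2 Equiv Equiv.Perm

/-- For `n ≥ 7`, the three largest conjugacy classes of `S_n` are, in decreasing order:
the class of an `(n-1)`-cycle times a fixed point (size `n!/(n-1)`), the class of `n`-cycles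
(size `n!/n`), and the class of an `(n-3)`-cycle times a `2`-cycle times a fixed point
(size `n!/(2(n-3))`). -/
theorem stmt_1 (n : ℕ) (hn : 7 ≤ n) :
    (Set.ncard (classOf n {n - 1, 1}) : ℚ) = (n.factorial : ℚ) / ((n : ℚ) - 1) ∧
    (Set.ncard (classOf n {n}) : ℚ) = (n.factorial : ℚ) / (n : ℚ) ∧
    (Set.ncard (classOf n {n - 3, 2, 1}) : ℚ) = (n.factorial : ℚ) / (2 * ((n : ℚ) - 3)) ∧
    Set.ncard (classOf n {n}) < Set.ncard (classOf n {n - 1, 1}) ∧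
    Set.ncard (classOf n {n - 3, 2, 1}) < Set.ncard (classOf n {n}) ∧
    ∀ m : Multiset ℕ, m.sum = n → (∀ k ∈ m, 1 ≤ k) →
      m ≠ {n - 1, 1} → m ≠ {n} → m ≠ {n - 3, 2, 1} →
      Set.ncard (classOf n m) ≤ Set.ncard (classOf n {n - 3, 2, 1}) := by
  classical
  have hcard : Fintype.card (Fin n) = n := Fintype.card_fin n
  -- filters of the three multisets
  have hf1 : (({n - 1, 1} : Multiset ℕ).filter (fun k => 2 ≤ k)) = {n - 1} := by
    rw [Multiset.insert_eq_cons, Multiset.filter_cons, Multiset.filter_singleton,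
      if_pos (by omega), if_neg (by omega)]
    simp
  have hf2 : (({n} : Multiset ℕ).filter (fun k => 2 ≤ k)) = {n} := by
    rw [Multiset.filter_singleton, if_pos (by omega)]
  have hf3 : (({n - 3, 2, 1} : Multiset ℕ).filter (fun k => 2 ≤ k)) = {n - 3, 2} := by
    rw [Multiset.insert_eq_cons, Multiset.insert_eq_cons, Multiset.filter_cons,
      Multiset.filter_cons, Multiset.filter_singleton,
      if_pos (by omega), if_pos (by omega), if_neg (by omega)]
    simp only [Multiset.empty_eq_zero, add_zero, Multiset.singleton_add,
      Multiset.insert_eq_cons]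
  -- sums and positivity
  have hs1 : ({n - 1, 1} : Multiset ℕ).sum = n := by
    simp only [Multiset.insert_eq_cons, Multiset.sum_cons, Multiset.sum_singleton]; omega
  have hs2 : ({n} : Multiset ℕ).sum = n := Multiset.sum_singleton n
  have hs3 : ({n - 3, 2, 1} : Multiset ℕ).sum = n := by
    simp only [Multiset.insert_eq_cons, Multiset.sum_cons, Multiset.sum_singleton]; omega
  have hp1 : ∀ k ∈ ({n - 1, 1} : Multiset ℕ), 1 ≤ k := by
    intro k hk
    simp only [Multiset.insert_eq_cons, Multiset.mem_cons, Multiset.mem_singleton] at hk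
    rcases hk with h | h <;> omega
  have hp2 : ∀ k ∈ ({n} : Multiset ℕ), 1 ≤ k := by
    intro k hk; rw [Multiset.mem_singleton] at hk; omega
  have hp3 : ∀ k ∈ ({n - 3, 2, 1} : Multiset ℕ), 1 ≤ k := by
    intro k hk
    simp only [Multiset.insert_eq_cons, Multiset.mem_cons, Multiset.mem_singleton] at hk
    rcases hk with h | h | h <;> omega
  -- representatives
  obtain ⟨σ₁, hσ₁⟩ : ∃ g : Equiv.Perm (Fin n), g.cycleType = ({n - 1} : Multiset ℕ) := by
    rw [Equiv.Perm.exists_with_cycleType_iff (Fin n)]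
    refine ⟨?_, ?_⟩
    · rw [Multiset.sum_singleton, hcard]; omega
    · intro a ha; rw [Multiset.mem_singleton] at ha; omega
  obtain ⟨σ₂, hσ₂⟩ : ∃ g : Equiv.Perm (Fin n), g.cycleType = ({n} : Multiset ℕ) := by
    rw [Equiv.Perm.exists_with_cycleType_iff (Fin n)]
    refine ⟨?_, ?_⟩
    · rw [Multiset.sum_singleton, hcard]
    · intro a ha; rw [Multiset.mem_singleton] at ha; omega
  obtain ⟨σ₃, hσ₃⟩ : ∃ g : Equiv.Perm (Fin n), g.cycleType = ({n - 3, 2} : Multiset ℕ) := by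
    rw [Equiv.Perm.exists_with_cycleType_iff (Fin n)]
    refine ⟨?_, ?_⟩
    · rw [Multiset.insert_eq_cons, Multiset.sum_cons, Multiset.sum_singleton, hcard]; omega
    · intro a ha
      simp only [Multiset.insert_eq_cons, Multiset.mem_cons, Multiset.mem_singleton] at ha
      rcases ha with h | h <;> omega
  -- centralizer cardinalities
  have hC₁ : Nat.card {τ : Equiv.Perm (Fin n) // Commute τ σ₁} = n - 1 := by
    apply le_antisymm
    · have h := card_commute_le_sub_one σ₁ (by rw [hσ₁, hcard]) (by rw [hcard]; omega)
      rwa [hcard] at h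
    · have h := centralizer_lower σ₁
      rw [hσ₁, Multiset.prod_singleton, Multiset.sum_singleton,
        (by omega : n - (n - 1) = 1), Nat.factorial_one, mul_one] at h
      exact h
  have hC₂ : Nat.card {τ : Equiv.Perm (Fin n) // Commute τ σ₂} = n := by
    apply le_antisymm
    · have h := card_commute_le_top σ₂ (by rw [hσ₂, hcard]) (by rw [hcard]; omega)
      rwa [hcard] at h
    · have h := centralizer_lower σ₂
      rw [hσ₂, Multiset.prod_singleton, Multiset.sum_singleton, Nat.sub_self,
        Nat.factorial_zero, mul_one] at h
      exact h
  have hC₃ : Nat.card {τ : Equiv.Perm (Fin n) // Commute τ σ₃} = (n - 3) * 2 := by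
    apply le_antisymm
    · have h := card_commute_le_pair σ₃ (by rw [hσ₃, hcard]) (by rw [hcard]; omega)
      rwa [hcard] at h
    · have h := centralizer_lower σ₃
      rw [hσ₃, Multiset.insert_eq_cons, Multiset.prod_cons, Multiset.prod_singleton,
        Multiset.sum_cons, Multiset.sum_singleton,
        (by omega : n - (n - 3 + 2) = 1), Nat.factorial_one, mul_one] at h
      exact h
  -- class size equations
  have E₁ := class_card_key hs1 hp1 (by rw [hσ₁, hf1] : σ₁.cycleType = _)
  have E₂ := class_card_key hs2 hp2 (by rw [hσ₂, hf2] : σ₂.cycleType = _)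
  have E₃ := class_card_key hs3 hp3 (by rw [hσ₃, hf3] : σ₃.cycleType = _)
  rw [hC₁] at E₁
  rw [hC₂] at E₂
  rw [hC₃] at E₃
  set c₁ := Set.ncard (classOf n {n - 1, 1}) with hc₁
  set c₂ := Set.ncard (classOf n {n}) with hc₂
  set c₃ := Set.ncard (classOf n {n - 3, 2, 1}) with hc₃
  have hfacpos : 0 < n.factorial := Nat.factorial_pos n
  have hc₁pos : 0 < c₁ := by
    rcases Nat.eq_zero_or_pos c₁ with h | h
    · rw [h, zero_mul] at E₁; omega
    · exact h
  have hc₂pos : 0 < c₂ := by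
    rcases Nat.eq_zero_or_pos c₂ with h | h
    · rw [h, zero_mul] at E₂; omega
    · exact h
  have h7Q : (7 : ℚ) ≤ (n : ℚ) := by exact_mod_cast hn
  refine ⟨?_, ?_, ?_, ?_, ?_, ?_⟩
  · -- c₁ = n! / (n-1)
    have hne : (n : ℚ) - 1 ≠ 0 := by intro h; nlinarith
    rw [eq_div_iff hne]
    have hQ : ((c₁ * (n - 1) : ℕ) : ℚ) = ((n.factorial : ℕ) : ℚ) := by exact_mod_cast E₁
    push_cast [Nat.cast_sub (by omega : 1 ≤ n)] at hQ
    linear_combination hQ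
  · have hne : (n : ℚ) ≠ 0 := by intro h; nlinarith
    rw [eq_div_iff hne]
    exact_mod_cast congrArg (fun x : ℕ => (x : ℚ)) E₂
  · have hne : 2 * ((n : ℚ) - 3) ≠ 0 := by intro h; nlinarith
    rw [eq_div_iff hne]
    have hQ : ((c₃ * ((n - 3) * 2) : ℕ) : ℚ) = ((n.factorial : ℕ) : ℚ) := by
      exact_mod_cast E₃
    push_cast [Nat.cast_sub (by omega : 3 ≤ n)] at hQ
    linear_combination hQ
  · -- c₂ < c₁
    by_contra hcon
    push_neg at hcon
    have h1 : c₁ * n ≤ c₂ * n := Nat.mul_le_mul_right n hcon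
    have h2 : c₁ * n = c₁ * (n - 1) + c₁ := by
      calc c₁ * n = c₁ * ((n - 1) + 1) := by rw [(by omega : n - 1 + 1 = n)]
        _ = c₁ * (n - 1) + c₁ := by ring
    omega
  · -- c₃ < c₂
    by_contra hcon
    push_neg at hcon
    have h1 : c₂ * ((n - 3) * 2) ≤ c₃ * ((n - 3) * 2) :=
      Nat.mul_le_mul_right _ hcon
    have h2 : c₂ * (n + 1) ≤ c₂ * ((n - 3) * 2) :=
      Nat.mul_le_mul_left _ (by omega)
    have h3 : c₂ * (n + 1) = c₂ * n + c₂ := by ring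
    omega
  · -- the general bound
    intro m hsum hpos hne1 hne2 _
    have aux := sum_filter_aux hsum hpos
    have hM2 : ∀ x ∈ m.filter (fun k => 2 ≤ k), 2 ≤ x := fun x hx => Multiset.of_mem_filter hx
    obtain ⟨σ₀, hσ₀⟩ : ∃ g : Equiv.Perm (Fin n),
        g.cycleType = m.filter (fun k => 2 ≤ k) := by
      rw [Equiv.Perm.exists_with_cycleType_iff (Fin n)]
      exact ⟨by rw [hcard]; omega, hM2⟩
    have key := class_card_key hsum hpos hσ₀
    have lower := centralizer_lower σ₀
    rw [hσ₀] at lower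
    have hMne1 : m.filter (fun k => 2 ≤ k) ≠ {n} := by
      intro h
      apply hne2
      rw [h, Multiset.sum_singleton] at aux
      have h0 : Multiset.card (m.filter (fun k => ¬ 2 ≤ k)) = 0 := by omega
      rw [← Multiset.filter_add_not (fun k => 2 ≤ k) m, h,
        Multiset.card_eq_zero.mp h0, add_zero]
    have hMne2 : m.filter (fun k => 2 ≤ k) ≠ {n - 1} := by
      intro h
      apply hne1
      rw [h, Multiset.sum_singleton] at aux
      have h0 : Multiset.card (m.filter (fun k => ¬ 2 ≤ k)) = 1 := by omega
      have h1 : m.filter (fun k => ¬ 2 ≤ k) = {1} := by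
        rw [filter_not_replicate hpos, h0, Multiset.replicate_one]
      rw [← Multiset.filter_add_not (fun k => 2 ≤ k) m, h, h1,
        Multiset.insert_eq_cons, ← Multiset.singleton_add]
    have comb := comb_bound hM2 hn aux hMne1 hMne2
    have hveq : n - (m.filter (fun k => 2 ≤ k)).sum
        = Multiset.card (m.filter (fun k => ¬ 2 ≤ k)) := by omega
    rw [hveq] at lower
    have bound : (n - 3) * 2 ≤ Nat.card {τ : Equiv.Perm (Fin n) // Commute τ σ₀} := by omega
    have h1 : Set.ncard (classOf n m) * ((n - 3) * 2)
        ≤ Set.ncard (classOf n m) * Nat.card {τ : Equiv.Perm (Fin n) // Commute τ σ₀} :=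
      Nat.mul_le_mul_left _ bound
    rw [key, ← E₃] at h1
    exact Nat.le_of_mul_le_mul_right h1 (by omega)
end

section
/- Let n ≥ 4 and let K be a conjugacy class of S_n with cycle lengths m_1 ≥ m_2 - m_1 ≥ ... (in the notation where a representative is (1⋯m_1)(m_1+1⋯m_2)⋯), having at least two non-trivial cycles (i.e., m_1 ≥ 2 and m_2 - m_1 ≥ 2). Let K' be the conjugacy class obtained by merging the two largest cycles into a single cycle of length m_2 (keeping all other cycles the same). Then |K'| ≥ |K|. -/
open Finset Nat

namespace Multiset

theorem prod_factorial_count_cons {α : Type*} [DecidableEq α] (a : α)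
    (m : Multiset α) :
    ∏ x ∈ (a ::ₘ m).toFinset, ((a ::ₘ m).count x)! =
      (m.count a + 1) * ∏ x ∈ m.toFinset, (m.count x)! := by
  have ha : a ∈ (a ::ₘ m).toFinset := by simp
  have hsub : m.toFinset ⊆ (a ::ₘ m).toFinset := fun x hx => by simp_all
  rw [prod_subset (f := fun x => (m.count x)!) hsub fun x _ hx => by
      rw [count_eq_zero_of_notMem (by simpa using hx), factorial_zero],
    ← mul_prod_erase _ _ ha, ← mul_prod_erase _ _ ha, count_cons_self, factorial_succ,
    mul_assoc]
  congr 2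
  refine prod_congr rfl fun x hx => ?_
  rw [count_cons_of_ne (ne_of_mem_erase hx)]

theorem eq_of_filter_ne_one_eq_of_sum_eq {s t : Multiset ℕ}
    (hf : s.filter (· ≠ 1) = t.filter (· ≠ 1)) (hs : s.sum = t.sum) : s = t := by
  have split (u : Multiset ℕ) : u = u.filter (· ≠ 1) + replicate (u.count 1) 1 := by
    rw [← filter_eq', ← filter_add_not (· ≠ 1) u]
    simp
  have hcount : s.count 1 = t.count 1 := by
    rw [split s, split t, sum_add, sum_add, hf] at hs
    simpa using hs
  rw [split s, split t, hf, hcount]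

end Multiset

theorem fullCycleType_eq_iff {n : ℕ} {σ : Equiv.Perm (Fin n)} {m : Multiset ℕ}
    (hm : m.sum = n) : fullCycleType σ = m ↔ σ.cycleType = m.filter (· ≠ 1) := by
  have hfilter : (fullCycleType σ).filter (· ≠ 1) = σ.cycleType := by
    rw [fullCycleType, Multiset.filter_add,
      Multiset.filter_eq_self.mpr fun a ha => (Equiv.Perm.one_lt_of_mem_cycleType ha).ne',
      Multiset.filter_eq_nil.mpr fun a ha => by simp [Multiset.eq_of_mem_replicate ha], add_zero]
  have hsum : (fullCycleType σ).sum = n := by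
    have := σ.sum_cycleType_le
    simp only [fullCycleType, Multiset.sum_add, Multiset.sum_replicate, smul_eq_mul, mul_one,
      Fintype.card_fin] at this ⊢
    omega
  refine ⟨fun h => h ▸ hfilter.symm, fun h => ?_⟩
  exact Multiset.eq_of_filter_ne_one_eq_of_sum_eq (hfilter.trans h) (hsum.trans hm.symm)

namespace Equiv.Perm

variable {α : Type*} [DecidableEq α] [Fintype α]

theorem card_cycleType_cons_cons_le_card_cycleType_add_cons {b c : ℕ} {r : Multiset ℕ}
    (hb : 2 ≤ b) (hc : 2 ≤ c) (hr : b + c ∉ r) :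
    #({g | g.cycleType = b ::ₘ c ::ₘ r} : Finset (Perm α)) ≤
      #({g | g.cycleType = (b + c) ::ₘ r} : Finset (Perm α)) := by
  set m := b ::ₘ c ::ₘ r
  set m' := (b + c) ::ₘ r
  by_cases hm : m.sum ≤ Fintype.card α ∧ ∀ a ∈ m, 2 ≤ a
  case neg => simp [(card_of_cycleType_eq_zero_iff α).mpr hm]
  have hsum : m'.sum = m.sum := by simp [m, m', add_assoc]
  have hm' : m'.sum ≤ Fintype.card α ∧ ∀ a ∈ m', 2 ≤ a := by
    refine ⟨hsum ▸ hm.1, fun a ha => ?_⟩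
    rcases Multiset.mem_cons.mp ha with rfl | ha
    · omega
    · exact hm.2 a (by simp [m, ha])
  have hK := card_of_cycleType_mul_eq α m
  have hK' := card_of_cycleType_mul_eq α m'
  rw [if_pos hm] at hK
  rw [if_pos hm'] at hK'
  have hz : (Fintype.card α - m'.sum)! * m'.prod * ∏ n ∈ m'.toFinset, (m'.count n)! ≤
      (Fintype.card α - m.sum)! * m.prod * ∏ n ∈ m.toFinset, (m.count n)! := by
    simp only [m, m', hsum, Multiset.prod_factorial_count_cons,
      Multiset.count_eq_zero_of_notMem hr, Multiset.prod_cons]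
    rw [zero_add, one_mul, ← mul_assoc b]
    gcongr
    · exact Nat.add_le_mul hb hc
    · rw [← mul_assoc]
      exact Nat.le_mul_of_pos_left _ (by positivity)
  have hpos : 0 < (Fintype.card α - m'.sum)! * m'.prod * ∏ n ∈ m'.toFinset, (m'.count n)! :=
    Nat.pos_of_mul_pos_left (hK'.trans_gt (factorial_pos _))
  refine Nat.le_of_mul_le_mul_right ?_ hpos
  calc _ ≤ _ := Nat.mul_le_mul_left _ hz
    _ = _ := hK.trans hK'.symm

end Equiv.Perm

theorem ncard_classOf {n : ℕ} {m : Multiset ℕ} (hm : m.sum = n) :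
    (classOf n m).ncard =
      #({σ | σ.cycleType = m.filter (· ≠ 1)} : Finset (Equiv.Perm (Fin n))) := by
  rw [← Set.ncard_coe_finset]
  congr 1
  ext σ
  simp [classOf, fullCycleType_eq_iff hm]

theorem stmt_2_general (n : ℕ) (b c : ℕ) (rest : Multiset ℕ)
    (hb : 2 ≤ b) (hc : 2 ≤ c)
    (hrest : ∀ x ∈ rest, 1 ≤ x ∧ x ≤ c)
    (hsum : b + c + rest.sum = n) :
    Set.ncard (classOf n (b ::ₘ c ::ₘ rest)) ≤ Set.ncard (classOf n ((b + c) ::ₘ rest)) := by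
  rw [ncard_classOf (by simp [← hsum, add_assoc]), ncard_classOf (by simp [← hsum]),
    Multiset.filter_cons_of_pos _ (by omega), Multiset.filter_cons_of_pos _ (by omega),
    Multiset.filter_cons_of_pos _ (by omega)]
  refine Equiv.Perm.card_cycleType_cons_cons_le_card_cycleType_add_cons hb hc fun h => ?_
  have := (hrest _ (Multiset.mem_of_mem_filter h)).2
  omega

/-- Merging the two largest cycles of a conjugacy class of `S_n` (assuming both are
non-trivial, i.e. of length at least `2`) produces a conjugacy class that is at least
as large. Here the class `K` has cycle lengths `b ≥ c ≥ 2` together with the remaining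
cycle lengths `rest` (all at most `c`), and `K'` replaces the cycles of lengths `b` and
`c` by a single cycle of length `b + c`. -/
theorem stmt_2 (n : ℕ) (hn : 4 ≤ n) (b c : ℕ) (rest : Multiset ℕ)
    (hb : 2 ≤ b) (hc : 2 ≤ c) (hcb : c ≤ b)
    (hrest : ∀ x ∈ rest, 1 ≤ x ∧ x ≤ c)
    (hsum : b + c + rest.sum = n) :
    Set.ncard (classOf n (b ::ₘ c ::ₘ rest)) ≤ Set.ncard (classOf n ((b + c) ::ₘ rest)) :=
  stmt_2_general n b c rest hb hc hrest hsum
end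

section
/- For n ≥ 7, if π is chosen uniformly at random from the alternating group A_n, K_max is the largest conjugacy class of S_n contained in A_n, and K is any other conjugacy class of S_n contained in A_n, then Pr(π ∈ K_max) − Pr(π ∈ K) ≥ (n − 6) / (n(n − 3)). -/
open Equiv

/-- A subset of a group is a conjugacy class if it is the set of elements conjugate to
some fixed element. -/
def IsConjClass {G : Type*} [Group G] (C : Set G) : Prop :=
  ∃ σ : G, C = {τ | IsConj σ τ}

/-!
If `π` is uniform on `A_n` and `g` is even, then `Pr(π ∈ gᴬ) = 2 / |C(g)|`, where `gᴬ` is the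
conjugacy class of `g` in `S_n` and `C(g)` its centralizer, so everything is a statement about
centralizer orders. An even cycle `σ` of length `n` or `n - 1` (whichever is odd) has
`|C(σ)| ≤ n`. Any other permutation, with cycle lengths `ℓᵢ` summing to `s`, has
`|C(g)| ≥ (n - s)! ∏ ℓᵢ ≥ 2(n - 3)`. Since `2(n - 3) > n` for `n ≥ 7`, `Kmax` is the class
of `σ`, every other class has probability at most `1/(n - 3)`, and
`2/n - 1/(n - 3) = (n - 6)/(n(n - 3))`.
-/

open Finset Nat Subgroup

theorem Multiset.sum_le_prod_of_two_le {l : Multiset ℕ} (hl : ∀ x ∈ l, 2 ≤ x) :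
    l.sum ≤ l.prod := by
  induction l using Multiset.induction with
  | empty => simp
  | cons a t ih =>
    have ha : 2 ≤ a := hl a (mem_cons_self a t)
    have ht : t.sum ≤ t.prod := ih fun x hx => hl x (mem_cons_of_mem hx)
    rw [sum_cons, prod_cons]
    rcases empty_or_exists_mem t with rfl | ⟨b, hb⟩
    · simp
    · have hb2 : 2 ≤ b := hl b (mem_cons_of_mem hb)
      have hbt : b ≤ t.sum := le_sum_of_mem hb
      nlinarith

theorem Multiset.two_mul_sub_two_le_prod {l : Multiset ℕ} (hl : ∀ x ∈ l, 2 ≤ x)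
    (hcard : 2 ≤ card l) : 2 * (l.sum - 2) ≤ l.prod := by
  obtain ⟨a, hmem⟩ := card_pos_iff_exists_mem.mp (by omega : 0 < card l)
  obtain ⟨t, rfl⟩ := exists_cons_of_mem hmem
  obtain ⟨b, hb⟩ := card_pos_iff_exists_mem.mp (by simp at hcard; omega : 0 < card t)
  have ha : 2 ≤ a := hl a (mem_cons_self a t)
  have hbt : 2 ≤ t.sum := (hl b (mem_cons_of_mem hb)).trans (le_sum_of_mem hb)
  have ht : t.sum ≤ t.prod := sum_le_prod_of_two_le fun x hx => hl x (mem_cons_of_mem hx)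
  have hkey : 2 * (a + t.sum) ≤ a * t.sum + 4 := by nlinarith
  have := Nat.mul_le_mul_left a ht
  rw [sum_cons, prod_cons]
  omega

theorem two_mul_sub_three_le_factorial_sub_sum_mul_prod {n : ℕ} {l : Multiset ℕ}
    (hl : ∀ x ∈ l, 2 ≤ x) (hsum : l.sum ≤ n) (hsingle : ∀ a, l = {a} → a + 2 ≤ n) :
    2 * (n - 3) ≤ (n - l.sum)! * l.prod := by
  obtain hcard | hcard | hcard : l.card = 0 ∨ l.card = 1 ∨ 2 ≤ l.card := by omega
  · rw [Multiset.card_eq_zero.mp hcard, Multiset.sum_zero, Multiset.prod_zero, Nat.sub_zero,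
      mul_one]
    rcases Nat.lt_or_ge n 3 with hn | hn
    · omega
    · have h2 : 2 ≤ (n - 1)! := (show 2 ≤ n - 1 by omega).trans (self_le_factorial _)
      calc 2 * (n - 3) ≤ n * 2 := by omega
        _ ≤ n * (n - 1)! := Nat.mul_le_mul_left n h2
        _ = n ! := mul_factorial_pred (by omega)
  · obtain ⟨a, rfl⟩ := Multiset.card_eq_one.mp hcard
    have ha : 2 ≤ a := hl a (Multiset.mem_singleton_self a)
    have hf : 2 ≤ n - a := by have := hsingle a rfl; omega
    have hkey : 2 * (a + (n - a)) ≤ (n - a) * a + 4 := by nlinarith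
    have := Nat.mul_le_mul_right a (self_le_factorial (n - a))
    rw [Multiset.sum_singleton, Multiset.prod_singleton]
    omega
  · have hs4 : 4 ≤ l.sum := by
      have := Multiset.card_nsmul_le_sum hl
      rw [smul_eq_mul] at this
      omega
    have hF := self_le_factorial (n - l.sum)
    have hkey : n - 3 ≤ (n - l.sum)! * (l.sum - 2) := by
      have h1 : l.sum - 3 ≤ (n - l.sum)! * (l.sum - 3) :=
        Nat.le_mul_of_pos_left _ (factorial_pos _)
      rw [show l.sum - 2 = l.sum - 3 + 1 by omega, mul_add_one]
      omega
    calc 2 * (n - 3) ≤ (n - l.sum)! * (2 * (l.sum - 2)) := by rw [mul_left_comm]; omega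
      _ ≤ (n - l.sum)! * l.prod :=
        Nat.mul_le_mul_left _ (Multiset.two_mul_sub_two_le_prod hl hcard)

namespace Equiv.Perm

variable {α : Type*} [Fintype α] [DecidableEq α]

theorem ncard_isConj_mul_card_centralizer (g : Perm α) :
    {h | IsConj g h}.ncard * Nat.card (centralizer {g}) = (Fintype.card α)! := by
  rw [nat_card_centralizer, ← Nat.card_coe_set_eq]
  exact card_isConj_mul_eq g

theorem card_centralizer_le_of_ncard_isConj_le {g h : Perm α}
    (hgh : {x | IsConj g x}.ncard ≤ {x | IsConj h x}.ncard) :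
    Nat.card (centralizer {h}) ≤ Nat.card (centralizer {g}) := by
  have hg := ncard_isConj_mul_card_centralizer g
  have hh := ncard_isConj_mul_card_centralizer h
  have hpos : 0 < {x | IsConj h x}.ncard :=
    Nat.pos_of_ne_zero fun h0 => factorial_ne_zero _ (by rw [← hh, h0, zero_mul])
  refine Nat.le_of_mul_le_mul_left ?_ hpos
  rw [hh, ← hg]
  exact Nat.mul_le_mul_right _ hgh

theorem ncard_isConj_div_card_alternatingGroup [Nontrivial α] (g : Perm α) :
    ({h | IsConj g h}.ncard : ℚ) / Nat.card (alternatingGroup α)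
      = 2 / Nat.card (centralizer {g}) := by
  have hA := two_mul_nat_card_alternatingGroup (α := α)
  rw [Nat.card_perm, Nat.card_eq_fintype_card (α := α), ← ncard_isConj_mul_card_centralizer g]
    at hA
  have hA0 : (Nat.card (alternatingGroup α) : ℚ) ≠ 0 := by exact_mod_cast Nat.card_pos.ne'
  have hC0 : (Nat.card (centralizer {g}) : ℚ) ≠ 0 := by exact_mod_cast Nat.card_pos.ne'
  rw [div_eq_div_iff hA0 hC0]
  exact_mod_cast hA.symm

theorem sign_eq_of_isConj {g h : Perm α} (hgh : IsConj g h) : sign g = sign h :=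
  isConj_iff_eq.mp (sign.map_isConj hgh)

theorem card_centralizer_of_isCycle {g : Perm α} (hg : g.IsCycle)
    (hα : Fintype.card α ≤ #g.support + 1) : Nat.card (centralizer {g}) = #g.support := by
  rw [nat_card_centralizer, hg.cycleType, factorial_eq_one.mpr (by simp; omega)]
  simp

theorem two_mul_sub_three_le_card_centralizer {g : Perm α}
    (hg : g.IsCycle → #g.support + 2 ≤ Fintype.card α) :
    2 * (Fintype.card α - 3) ≤ Nat.card (centralizer {g}) := by
  have hsingle (k : ℕ) (hk : g.cycleType = {k}) : k + 2 ≤ Fintype.card α := by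
    have := hg (card_cycleType_eq_one.mp (by simp [hk]))
    rwa [← sum_cycleType, hk, Multiset.sum_singleton] at this
  rw [nat_card_centralizer]
  exact (two_mul_sub_three_le_factorial_sub_sum_mul_prod (fun _ => two_le_of_mem_cycleType)
    (sum_cycleType_le g) hsingle).trans
    (Nat.le_mul_of_pos_right _ (Finset.prod_pos fun _ _ => factorial_pos _))

theorem IsCycle.odd_card_support {g : Perm α} (hg : g.IsCycle) (hs : Perm.sign g = 1) :
    Odd #g.support := by
  rw [hg.sign, neg_eq_iff_eq_neg] at hs
  exact (neg_one_pow_eq_neg_one_iff_odd (by decide)).mp hs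

theorem exists_isCycle_sign_eq_one (hα : 3 ≤ Fintype.card α) :
    ∃ g : Perm α, g.IsCycle ∧ sign g = 1 ∧ Fintype.card α ≤ #g.support + 1 := by
  obtain ⟨k, hodd, hk, hkα⟩ : ∃ k, Odd k ∧ Fintype.card α ≤ k + 1 ∧ k ≤ Fintype.card α := by
    rcases Nat.even_or_odd (Fintype.card α) with ⟨m, hm⟩ | hodd
    · exact ⟨Fintype.card α - 1, ⟨m - 1, by omega⟩, by omega, by omega⟩
    · exact ⟨_, hodd, by omega, le_rfl⟩
  have hk2 : 2 ≤ k := by obtain ⟨j, rfl⟩ := hodd; omega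
  obtain ⟨g, hg⟩ := (exists_with_cycleType_iff α (m := {k})).mpr ⟨by simpa using hkα, by simpa⟩
  have hcycle : g.IsCycle := card_cycleType_eq_one.mp (by simp [hg])
  have hsupp : #g.support = k := by rw [← sum_cycleType, hg, Multiset.sum_singleton]
  refine ⟨g, hcycle, ?_, hsupp ▸ hk⟩
  rw [hcycle.sign, hsupp, hodd.neg_one_pow, neg_neg]

theorem IsCycle.isConj_of_sign_eq_one {g h : Perm α} (hg : g.IsCycle) (hh : h.IsCycle)
    (hgs : Perm.sign g = 1) (hhs : Perm.sign h = 1) (hgα : Fintype.card α ≤ #g.support + 1)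
    (hhα : Fintype.card α ≤ #h.support + 1) : IsConj g h := by
  refine hg.isConj hh ?_
  obtain ⟨i, hi⟩ := hg.odd_card_support hgs
  obtain ⟨j, hj⟩ := hh.odd_card_support hhs
  have := Finset.card_le_univ g.support
  have := Finset.card_le_univ h.support
  omega

theorem isConj_or_two_mul_sub_three_le_card_centralizer {σ g : Perm α} (hσ : σ.IsCycle)
    (hσs : sign σ = 1) (hσα : Fintype.card α ≤ #σ.support + 1) (hgs : sign g = 1) :
    IsConj σ g ∨ 2 * (Fintype.card α - 3) ≤ Nat.card (centralizer {g}) := by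
  by_cases hlong : g.IsCycle ∧ Fintype.card α ≤ #g.support + 1
  · exact Or.inl (hσ.isConj_of_sign_eq_one hlong.1 hσs hgs hσα hlong.2)
  · refine Or.inr (two_mul_sub_three_le_card_centralizer fun hg => ?_)
    have := not_le.mp fun h => hlong ⟨hg, h⟩
    omega

end Equiv.Perm

theorem sub_div_mul_sub_le_two_div_sub_two_div {n x y : ℚ} (hn : 3 < n) (hx : 0 < x)
    (hxn : x ≤ n) (hy : 2 * (n - 3) ≤ y) :
    (n - 6) / (n * (n - 3)) ≤ 2 / x - 2 / y := by
  have hn3 : 0 < n - 3 := by linarith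
  calc (n - 6) / (n * (n - 3)) = 2 / n - 2 / (2 * (n - 3)) := by
        field_simp
        ring
    _ ≤ 2 / x - 2 / y := sub_le_sub (div_le_div_of_nonneg_left (by norm_num) hx hxn)
        (div_le_div_of_nonneg_left (by norm_num) (by positivity) hy)

open Perm

/-- For `n ≥ 7`, if `π` is uniform on `A_n`, `Kmax` is the largest conjugacy class of `S_n`
contained in `A_n` and `K` is any other conjugacy class of `S_n` contained in `A_n`, then
`Pr(π ∈ Kmax) − Pr(π ∈ K) ≥ (n − 6)/(n(n − 3))`. -/
theorem stmt_3 (n : ℕ) (hn : 7 ≤ n) (Kmax K : Set (Equiv.Perm (Fin n)))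
    (hKmaxConj : IsConjClass Kmax)
    (hKmaxA : Kmax ⊆ (alternatingGroup (Fin n) : Set (Equiv.Perm (Fin n))))
    (hmax : ∀ C : Set (Equiv.Perm (Fin n)), IsConjClass C →
      C ⊆ (alternatingGroup (Fin n) : Set (Equiv.Perm (Fin n))) →
      Set.ncard C ≤ Set.ncard Kmax)
    (hKConj : IsConjClass K)
    (hKA : K ⊆ (alternatingGroup (Fin n) : Set (Equiv.Perm (Fin n))))
    (hne : K ≠ Kmax) :
    (Set.ncard Kmax : ℚ) / (Nat.card (alternatingGroup (Fin n)) : ℚ)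
      - (Set.ncard K : ℚ) / (Nat.card (alternatingGroup (Fin n)) : ℚ)
      ≥ ((n : ℚ) - 6) / ((n : ℚ) * ((n : ℚ) - 3)) := by
  have hcard : Fintype.card (Fin n) = n := Fintype.card_fin n
  have : Nontrivial (Fin n) := Fin.nontrivial_iff_two_le.mpr (by omega)
  obtain ⟨σ, hσ, hσs, hσα⟩ := exists_isCycle_sign_eq_one (α := Fin n) (by omega)
  obtain ⟨τ, rfl⟩ := hKmaxConj
  obtain ⟨ρ, rfl⟩ := hKConj
  have hτs : sign τ = 1 := hKmaxA (IsConj.refl τ)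
  have hρs : sign ρ = 1 := hKA (IsConj.refl ρ)
  have hσA : {h | IsConj σ h} ⊆ (alternatingGroup (Fin n) : Set (Perm (Fin n))) :=
    fun h hσh => (sign_eq_of_isConj hσh).symm.trans hσs
  have hτσ : Nat.card (centralizer {τ}) ≤ #σ.support :=
    card_centralizer_of_isCycle hσ hσα ▸
      card_centralizer_le_of_ncard_isConj_le (hmax _ ⟨σ, rfl⟩ hσA)
  have hσn : #σ.support ≤ n := (card_le_univ σ.support).trans hcard.le
  -- if `ρ ~ σ` then `τ ≁ σ`, so `|C(τ)| ≥ 2(n - 3) > n ≥ |C(σ)|`, contradicting `hmax`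
  have hρ : 2 * (Fintype.card (Fin n) - 3) ≤ Nat.card (centralizer {ρ}) := by
    refine (isConj_or_two_mul_sub_three_le_card_centralizer hσ hσs hσα hρs).resolve_left
      fun hσρ => ?_
    have hτ := (isConj_or_two_mul_sub_three_le_card_centralizer hσ hσs hσα hτs).resolve_left
      fun hστ => hne (hσρ.symm.trans hστ).conjugatesOf_eq
    omega
  rw [ge_iff_le, ncard_isConj_div_card_alternatingGroup, ncard_isConj_div_card_alternatingGroup]
  refine sub_div_mul_sub_le_two_div_sub_two_div (by exact_mod_cast (by omega : 3 < n)) ?_ ?_ ?_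
  · exact_mod_cast Nat.card_pos
  · exact_mod_cast hτσ.trans hσn
  · have : ((2 * (n - 3) : ℕ) : ℚ) ≤ Nat.card (centralizer {ρ}) := by exact_mod_cast hcard ▸ hρ
    push_cast [Nat.cast_sub (by omega : 3 ≤ n)] at this
    exact this
end

section
/- For any partition λ of n and positive integer m, the Schur function specialization satisfies s_λ(1^m) = ∏_{r ∈ λ} (m + cont(r)) / h(r), where the product is over boxes r of the Young diagram of λ, cont((i,j)) = j − i is the content, and h(r) is the hook length. -/
/-!
Removing the entries equal to `m` from a tableau with entries `≤ m` leaves a tableau with entries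
`< m` on a diagram `ν ≤ μ` such that `μ / ν` is a horizontal strip, i.e. the row lengths of `ν`
interlace those of `μ`. Hence the numbers `N_m(μ)` of tableaux with entries `< m` satisfy the
branching rule `N_{m+1}(μ) = ∑_ν N_m(ν)`.

With `α = λ + δ_m`, the determinant `D_m(μ) = det [C(α_{m-1-i}, j)]_{i, j < m}` satisfies the
same recursion: after subtracting from each row of the matrix of `D_{m+1}(μ)` the row above it, the
hockey-stick identity and multilinearity expand `D_{m+1}(μ)` as the sum of the `D_m(ν)` over the
interlacing `ν`. So `N_m(μ) = D_m(μ) = ∏_{r < k} (α_r - α_k) / ∏_{i < m} i!`.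

In row `r`, the hook lengths together with the differences `α_r - α_k` (`r < k < m`) are exactly
`1, …, α_r`, while the contents give `∏_j (m + j - r) = α_r! / (m - 1 - r)!`; this turns the
Vandermonde quotient into the hook-content product.
-/

/-- The hook length of the box `(i, j)` of a Young diagram: the number of boxes directly
to the right, plus the number directly below, plus one. -/
def hookLength (μ : YoungDiagram) (i j : ℕ) : ℕ :=
  μ.rowLen i + μ.colLen j - i - j - 1

open Finset Matrix
open scoped Nat

theorem Nat.card_eq_sum_card_fiberwise {X β : Type*} [Finite X] [DecidableEq β] {f : X → β}
    {s : Finset β} (h : ∀ x, f x ∈ s) : Nat.card X = ∑ b ∈ s, Nat.card {x // f x = b} := by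
  have := Fintype.ofFinite X
  rw [Nat.card_eq_fintype_card, ← Finset.card_univ,
    Finset.card_eq_sum_card_fiberwise fun x _ => h x]
  refine Finset.sum_congr rfl fun b _ => ?_
  rw [Nat.card_eq_fintype_card, Fintype.card_subtype]

theorem Finset.prod_mul_prod_eq_factorial {ι κ : Type*} {s : Finset ι} {t : Finset κ}
    {f : ι → ℕ} {g : κ → ℕ} {N : ℕ} (hf : Set.InjOn f s) (hg : Set.InjOn g t)
    (hfg : ∀ i ∈ s, ∀ k ∈ t, f i ≠ g k) (hfN : ∀ i ∈ s, f i ∈ Icc 1 N)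
    (hgN : ∀ k ∈ t, g k ∈ Icc 1 N) (hcard : #s + #t = N) :
    (∏ i ∈ s, f i) * ∏ k ∈ t, g k = N ! := by
  classical
  have hdisj : Disjoint (s.image f) (t.image g) := by
    simp only [disjoint_left, mem_image]
    rintro _ ⟨i, hi, rfl⟩ ⟨k, hk, hfk⟩
    exact hfg i hi k hk hfk.symm
  have hunion : s.image f ∪ t.image g = Icc 1 N := by
    refine eq_of_subset_of_card_le (union_subset ?_ ?_) ?_
    · simpa [subset_iff] using hfN
    · simpa [subset_iff] using hgN
    · rw [card_union_of_disjoint hdisj, card_image_of_injOn hf, card_image_of_injOn hg, hcard,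
        Nat.card_Icc, Nat.add_sub_cancel]
  rw [← prod_Ico_id_eq_factorial, Finset.Ico_add_one_right_eq_Icc, ← hunion, prod_union hdisj,
    prod_image hf, prod_image hg]

theorem sum_Ico_choose_eq_sub {u v : ℕ} (h : u ≤ v) (j : ℕ) :
    ∑ x ∈ Ico u v, (x.choose j : ℚ) = (v.choose (j + 1) : ℚ) - u.choose (j + 1) := by
  induction v, h using Nat.le_induction with
  | base => simp
  | succ v hv ih =>
    rw [sum_Ico_succ_top hv, ih, Nat.choose_succ_succ', Nat.cast_add]
    ring

def binomMatrix {n : ℕ} (v : Fin n → ℕ) : Matrix (Fin n) (Fin n) ℚ :=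
  of fun i j => ((v i).choose j : ℚ)

theorem det_binomMatrix {n : ℕ} (v : Fin n → ℕ) :
    (binomMatrix v).det = (vandermonde fun i => (v i : ℚ)).det / ∏ j : Fin n, ((j : ℕ)! : ℚ) := by
  rw [det_eval_matrixOfPolynomials_eq_det_vandermonde _ (fun j => descPochhammer ℚ j)
    (fun j => descPochhammer_natDegree ℚ j) (fun j => monic_descPochhammer ℚ j)]
  have hfact : ∀ j : Fin n, ((j : ℕ)! : ℚ) ≠ 0 := fun j => by positivity
  rw [eq_div_iff (prod_ne_zero_iff.mpr fun j _ => hfact j), mul_comm, ← det_mul_row]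
  congr 1
  ext i j
  simp [binomMatrix, descPochhammer_eval_eq_descFactorial,
    Nat.descFactorial_eq_factorial_mul_choose]

theorem sum_det_binomMatrix_piFinset_Ico {m : ℕ} (w : Fin (m + 1) → ℕ) (hw : Monotone w) :
    ∑ b ∈ Fintype.piFinset (fun i : Fin m => Ico (w i.castSucc) (w i.succ)), (binomMatrix b).det
      = (binomMatrix w).det := by
  classical
  have hsum : ∑ b ∈ Fintype.piFinset (fun i : Fin m => Ico (w i.castSucc) (w i.succ)),
      (binomMatrix b).det = (of fun i j : Fin m =>
        ((w i.succ).choose (j + 1) : ℚ) - (w i.castSucc).choose (j + 1)).det := by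
    refine ((detRowAlternating (n := Fin m) (R := ℚ)).toMultilinearMap.map_sum_finset
      (fun (_ : Fin m) (x : ℕ) (j : Fin m) => (x.choose j : ℚ)) _).symm.trans ?_
    change det _ = det _
    congr 1
    ext i j
    simp [Finset.sum_apply, sum_Ico_choose_eq_sub (hw (Fin.castSucc_le_succ i))]
  -- Subtracting from each row the one above leaves `(1, 0, …, 0)` as the first column.
  let D : Matrix (Fin (m + 1)) (Fin (m + 1)) ℚ :=
    Fin.cons (binomMatrix w 0) fun i => binomMatrix w i.succ - binomMatrix w i.castSucc
  have hD : (binomMatrix w).det = D.det :=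
    det_eq_of_forall_row_eq_smul_add_pred (fun _ => 1) (fun _ => rfl) fun i j => by simp [D]
  rw [hsum, hD, det_succ_column_zero, Fin.sum_univ_succ,
    Fintype.sum_eq_zero _ fun i => by simp [D, binomMatrix], add_zero, Fin.val_zero, pow_zero,
    one_mul, show D 0 0 = 1 by simp [D, binomMatrix], one_mul, Fin.succAbove_zero]
  rfl

theorem Matrix.det_vandermonde_rev {R : Type*} [CommRing R] {n : ℕ} (v : Fin n → R) :
    (vandermonde fun i => v i.rev).det = ∏ i, ∏ j ∈ Ioi i, (v i - v j) := by
  rw [det_vandermonde, prod_comm' (t' := univ) (s' := Iio) fun _ _ => by simp,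
    ← Fintype.prod_equiv Fin.revPerm _ _ fun _ => rfl]
  refine prod_congr rfl fun i _ => ?_
  rw [Fin.revPerm_apply, ← Fin.map_revPerm_Ioi, prod_map]
  simp

namespace YoungDiagram

variable {μ : YoungDiagram} {m : ℕ}

theorem ext_rowLen {ν : YoungDiagram} (h : ∀ i, μ.rowLen i = ν.rowLen i) : μ = ν := by
  ext ⟨i, j⟩
  simp only [mem_cells, mem_iff_lt_rowLen, h]

theorem rowLen_mono {ν : YoungDiagram} (h : μ ≤ ν) (i : ℕ) : μ.rowLen i ≤ ν.rowLen i := by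
  by_contra! hc
  exact (mem_iff_lt_rowLen.mp (h (mem_iff_lt_rowLen.mpr hc))).false

theorem rowLen_eq_zero {i : ℕ} (h : ∀ j, (i, j) ∉ μ) : μ.rowLen i = 0 :=
  Nat.eq_zero_of_not_pos fun hpos => h 0 (mem_iff_lt_rowLen.mpr hpos)

theorem hookLength_pos {i j : ℕ} (h : (i, j) ∈ μ) : 0 < hookLength μ i j := by
  have := mem_iff_lt_rowLen.mp h
  have := mem_iff_lt_colLen.mp h
  unfold hookLength
  omega

theorem hookLength_strictAntiOn (i : ℕ) :
    StrictAntiOn (hookLength μ i) (range (μ.rowLen i)) := by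
  intro j₁ _ j₂ hj₂ hj
  have := mem_iff_lt_colLen.mp (mem_iff_lt_rowLen.mpr (mem_range.mp hj₂))
  have := μ.colLen_anti j₁ j₂ hj.le
  have := mem_range.mp hj₂
  unfold hookLength
  omega

theorem prod_cells_eq_prod_rows {M : Type*} [CommMonoid M] (hμ : μ.colLen 0 ≤ m)
    (f : ℕ × ℕ → M) : ∏ c ∈ μ.cells, f c = ∏ r : Fin m, ∏ j ∈ range (μ.rowLen r), f (r, j) := by
  rw [Fin.prod_univ_eq_prod_range (fun r => ∏ j ∈ range (μ.rowLen r), f (r, j)),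
    ← prod_fiberwise_of_maps_to (g := Prod.fst) (t := range m)]
  · refine prod_congr rfl fun r _ => ?_
    rw [show μ.cells.filter (·.1 = r) = μ.row r from rfl, row_eq_prod, prod_product,
      prod_singleton]
  · intro c hc
    have := mem_iff_lt_colLen.mp (μ.up_left_mem le_rfl (Nat.zero_le c.2) ((mem_cells c).mp hc))
    exact mem_range.mpr (by omega)

/-- Row `i < m` has length `min_{k ≤ i} t k`, so that this is a Young diagram for every `t`. -/
def ofFinRowLens (t : Fin m → ℕ) : YoungDiagram where
  cells := (range m ×ˢ range (univ.sup t)).filter fun c => ∀ k : Fin m, (k : ℕ) ≤ c.1 → c.2 < t k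
  isLowerSet := by
    rintro ⟨i₁, j₁⟩ ⟨i₂, j₂⟩ ⟨hi, hj⟩ hmem
    simp only [coe_filter, mem_product, mem_range, Set.mem_ofPred_eq] at hmem ⊢
    exact ⟨⟨by omega, by omega⟩, fun k hk => hj.trans_lt (hmem.2 k (hk.trans hi))⟩

theorem mem_ofFinRowLens {t : Fin m → ℕ} {i j : ℕ} :
    (i, j) ∈ ofFinRowLens t ↔ i < m ∧ ∀ k : Fin m, (k : ℕ) ≤ i → j < t k := by
  rw [← mem_cells]
  simp only [ofFinRowLens, mem_filter, mem_product, mem_range]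
  refine ⟨fun h => ⟨h.1.1, h.2⟩, fun h => ⟨⟨h.1, ?_⟩, h.2⟩⟩
  exact (h.2 ⟨0, by omega⟩ (Nat.zero_le i)).trans_le (le_sup (mem_univ _))

theorem rowLen_ofFinRowLens {t : Fin m → ℕ} (ht : Antitone t) (r : Fin m) :
    (ofFinRowLens t).rowLen r = t r := by
  refine eq_of_forall_lt_iff fun j => ?_
  rw [← mem_iff_lt_rowLen, mem_ofFinRowLens]
  exact ⟨fun h => h.2 r le_rfl, fun h => ⟨r.isLt, fun k hk => h.trans_le (ht hk)⟩⟩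

theorem rowLen_ofFinRowLens_of_le (t : Fin m → ℕ) {i : ℕ} (hi : m ≤ i) :
    (ofFinRowLens t).rowLen i = 0 :=
  rowLen_eq_zero fun _ h => (mem_ofFinRowLens.mp h).1.not_ge hi

theorem colLen_ofFinRowLens_le (t : Fin m → ℕ) : (ofFinRowLens t).colLen 0 ≤ m := by
  by_contra! h
  exact (mem_ofFinRowLens.mp (mem_iff_lt_colLen.mpr h)).1.false

/-- The row lengths of the diagrams `ν ≤ μ` with at most `m` rows for which `μ / ν` is a
horizontal strip. -/
def interlacingRowLens (μ : YoungDiagram) (m : ℕ) : Finset (Fin m → ℕ) :=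
  Fintype.piFinset fun r => Icc (μ.rowLen (r + 1)) (μ.rowLen r)

variable {t : Fin m → ℕ}

theorem mem_interlacingRowLens :
    t ∈ μ.interlacingRowLens m ↔ ∀ r : Fin m, μ.rowLen (r + 1) ≤ t r ∧ t r ≤ μ.rowLen r := by
  simp [interlacingRowLens]

theorem antitone_of_mem_interlacingRowLens (ht : t ∈ μ.interlacingRowLens m) : Antitone t := by
  rw [mem_interlacingRowLens] at ht
  refine antitone_iff_forall_lt.mpr fun a b hab => ?_
  calc t b ≤ μ.rowLen b := (ht b).2
    _ ≤ μ.rowLen (a + 1) := μ.rowLen_anti _ _ hab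
    _ ≤ t a := (ht a).1

theorem ofFinRowLens_le (ht : t ∈ μ.interlacingRowLens m) : ofFinRowLens t ≤ μ := by
  rintro ⟨i, j⟩ h
  obtain ⟨hi, hj⟩ := mem_ofFinRowLens.mp h
  exact mem_iff_lt_rowLen.mpr ((hj ⟨i, hi⟩ le_rfl).trans_le ((mem_interlacingRowLens.mp ht _).2))

theorem mem_ofFinRowLens_of_succ_mem (hμ : μ.colLen 0 ≤ m + 1)
    (ht : t ∈ μ.interlacingRowLens m) {i j : ℕ} (h : (i + 1, j) ∈ μ) :
    (i, j) ∈ ofFinRowLens t := by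
  have hi : i < m := by
    have := mem_iff_lt_colLen.mp (μ.up_left_mem le_rfl (Nat.zero_le j) h)
    omega
  refine mem_ofFinRowLens.mpr ⟨hi, fun k hk => ?_⟩
  calc j < μ.rowLen (i + 1) := mem_iff_lt_rowLen.mp h
    _ ≤ μ.rowLen (k + 1) := μ.rowLen_anti _ _ (by omega)
    _ ≤ t k := (mem_interlacingRowLens.mp ht k).1

/-- The strictly decreasing sequence `λ + δ_m`, where `δ_m = (m - 1, …, 1, 0)`. -/
def shiftedRowLens (μ : YoungDiagram) (m : ℕ) (r : Fin m) : ℕ := μ.rowLen r + (m - 1 - r)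

theorem shiftedRowLens_strictAnti (μ : YoungDiagram) (m : ℕ) :
    StrictAnti (μ.shiftedRowLens m) := fun a b hab => by
  have := μ.rowLen_anti a b hab.le
  have : (a : ℕ) < b := hab
  simp only [shiftedRowLens]
  omega

theorem sum_det_binomMatrix_interlacingRowLens :
    ∑ t ∈ μ.interlacingRowLens m, (binomMatrix fun i => t i.rev + i).det
      = (binomMatrix (μ.shiftedRowLens (m + 1) ∘ Fin.rev)).det := by
  have hw : Monotone (μ.shiftedRowLens (m + 1) ∘ Fin.rev) :=
    ((μ.shiftedRowLens_strictAnti (m + 1)).comp Fin.rev_strictAnti).monotone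
  rw [← sum_det_binomMatrix_piFinset_Ico _ hw]
  have hrev (i : Fin m) : (i.rev : ℕ) + i = m - 1 := by rw [Fin.val_rev]; omega
  refine sum_nbij' (fun t i => t i.rev + i) (fun b r => b r.rev - r.rev) ?_ ?_ ?_ ?_
    fun _ _ => rfl
  all_goals
    simp only [mem_interlacingRowLens, Fintype.mem_piFinset, mem_Ico, Function.comp_apply,
      Fin.rev_castSucc, Fin.rev_succ, shiftedRowLens, Fin.val_succ, Fin.val_castSucc, Fin.rev_rev]
  · intro t ht i
    have := ht i.rev
    have := hrev i
    omega
  · intro b hb r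
    have := hb r.rev
    have := hrev r.rev
    simp only [Fin.rev_rev] at *
    omega
  · intro t _
    funext r
    have := hrev r.rev
    simp only [Fin.rev_rev] at *
    omega
  · intro b hb
    funext i
    have := hb i
    have := hrev i
    omega

/-- With `α = μ.shiftedRowLens m`, the hook lengths in row `r` and the differences `α_r - α_k`
for `k > r` are exactly `1, …, α_r`. -/
theorem prod_hookLength_mul_prod_sub_shiftedRowLens (hμ : μ.colLen 0 ≤ m) (r : Fin m) :
    (∏ j ∈ range (μ.rowLen r), hookLength μ r j)
        * ∏ k ∈ Ioi r, (μ.shiftedRowLens m r - μ.shiftedRowLens m k)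
      = (μ.shiftedRowLens m r)! := by
  have hα := μ.shiftedRowLens_strictAnti m
  have hmem {j : ℕ} (hj : j ∈ range (μ.rowLen r)) : (↑r, j) ∈ μ :=
    mem_iff_lt_rowLen.mpr (mem_range.mp hj)
  refine prod_mul_prod_eq_factorial (hookLength_strictAntiOn r).injOn ?_ ?_ ?_ ?_ ?_
  · intro k₁ hk₁ k₂ hk₂ h
    have := hα (mem_Ioi.mp hk₁)
    have := hα (mem_Ioi.mp hk₂)
    exact hα.injective (by simp only at h; omega)
  · intro j hj k hk h
    have := mem_iff_lt_colLen.mp (hmem hj)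
    have := μ.rowLen_anti r k (mem_Ioi.mp hk).le
    have : (r : ℕ) < k := Fin.lt_def.mp (mem_Ioi.mp hk)
    simp only [hookLength, shiftedRowLens] at h
    by_cases hkj : (↑k, j) ∈ μ
    · have := mem_iff_lt_rowLen.mp hkj
      have := mem_iff_lt_colLen.mp hkj
      omega
    · have := mem_iff_lt_rowLen.not.mp hkj
      have := mem_iff_lt_colLen.not.mp hkj
      omega
  · intro j hj
    have := mem_iff_lt_colLen.mp (hmem hj)
    have := (μ.colLen_anti 0 j (Nat.zero_le j)).trans hμ
    have := mem_range.mp hj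
    simp only [mem_Icc, hookLength, shiftedRowLens]
    omega
  · intro k hk
    have := hα (mem_Ioi.mp hk)
    simp only [mem_Icc]
    omega
  · rw [card_range, Fin.card_Ioi, shiftedRowLens]

theorem prod_content_row (r : Fin m) :
    ∏ j ∈ range (μ.rowLen r), ((m : ℚ) + j - r)
      = ((μ.shiftedRowLens m r)! : ℚ) / (m - 1 - r)! := by
  have h := Nat.factorial_mul_ascFactorial (m - 1 - r) (μ.rowLen r)
  rw [Nat.ascFactorial_eq_prod_range] at h
  rw [eq_div_iff (by positivity), shiftedRowLens, add_comm, ← h, Nat.cast_mul, mul_comm,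
    Nat.cast_prod]
  congr 1
  refine prod_congr rfl fun j _ => ?_
  push_cast [show m - 1 - (r : ℕ) + 1 = m - r by omega, Nat.cast_sub r.isLt.le]
  ring

theorem prod_content_div_hookLength_row (hμ : μ.colLen 0 ≤ m) (r : Fin m) :
    ∏ j ∈ range (μ.rowLen r), ((m : ℚ) + j - r) / hookLength μ r j
      = (∏ k ∈ Ioi r, ((μ.shiftedRowLens m r : ℚ) - μ.shiftedRowLens m k)) / (m - 1 - r)! := by
  have hrow := congrArg (Nat.cast (R := ℚ)) (prod_hookLength_mul_prod_sub_shiftedRowLens hμ r)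
  push_cast at hrow
  rw [prod_congr rfl fun k hk => Nat.cast_sub
    ((μ.shiftedRowLens_strictAnti m (mem_Ioi.mp hk)).le)] at hrow
  have hhook : ∏ j ∈ range (μ.rowLen r), (hookLength μ r j : ℚ) ≠ 0 :=
    prod_ne_zero_iff.mpr fun j hj =>
      Nat.cast_ne_zero.mpr (hookLength_pos (mem_iff_lt_rowLen.mpr (mem_range.mp hj))).ne'
  rw [prod_div_distrib, prod_content_row, ← hrow]
  field_simp

end YoungDiagram

namespace SemistandardYoungTableau

variable {μ ν : YoungDiagram}

theorem le_entry (T : SemistandardYoungTableau μ) {i j : ℕ} (h : (i, j) ∈ μ) : i ≤ T i j := by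
  induction i with
  | zero => exact Nat.zero_le _
  | succ i ih =>
    exact (ih (μ.up_left_mem i.le_succ le_rfl h)).trans_lt (T.col_strict i.lt_succ_self h)

def shapeLT (T : SemistandardYoungTableau μ) (m : ℕ) : YoungDiagram where
  cells := μ.cells.filter fun c => T c.1 c.2 < m
  isLowerSet := by
    rintro ⟨i₁, j₁⟩ ⟨i₂, j₂⟩ ⟨hi, hj⟩ hmem
    simp only [coe_filter, YoungDiagram.mem_cells] at hmem ⊢
    refine ⟨μ.up_left_mem hi hj hmem.1, ?_⟩
    calc T i₂ j₂ ≤ T i₂ j₁ := T.row_weak_of_le hj (μ.up_left_mem hi le_rfl hmem.1)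
      _ ≤ T i₁ j₁ := T.col_weak hi hmem.1
      _ < m := hmem.2

theorem mem_shapeLT {T : SemistandardYoungTableau μ} {m i j : ℕ} :
    (i, j) ∈ T.shapeLT m ↔ (i, j) ∈ μ ∧ T i j < m := by
  rw [← YoungDiagram.mem_cells]
  simp [shapeLT]

theorem shapeLT_le (T : SemistandardYoungTableau μ) (m : ℕ) : T.shapeLT m ≤ μ :=
  fun _ h => (mem_shapeLT.mp h).1

theorem rowLen_shapeLT_of_le (T : SemistandardYoungTableau μ) {m i : ℕ} (hi : m ≤ i) :
    (T.shapeLT m).rowLen i = 0 :=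
  YoungDiagram.rowLen_eq_zero fun _ h =>
    (hi.trans (T.le_entry (mem_shapeLT.mp h).1)).not_gt (mem_shapeLT.mp h).2

theorem rowLens_shapeLT_eq_iff {T : SemistandardYoungTableau μ} {m : ℕ} {t : Fin m → ℕ}
    (ht : Antitone t) :
    (fun r : Fin m => (T.shapeLT m).rowLen r) = t ↔ T.shapeLT m = YoungDiagram.ofFinRowLens t := by
  refine ⟨fun h => YoungDiagram.ext_rowLen fun i => ?_, fun h => ?_⟩
  · rcases lt_or_ge i m with hi | hi
    · rw [YoungDiagram.rowLen_ofFinRowLens ht ⟨i, hi⟩, ← h]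
    · rw [T.rowLen_shapeLT_of_le hi, YoungDiagram.rowLen_ofFinRowLens_of_le t hi]
  · funext r
    rw [h, YoungDiagram.rowLen_ofFinRowLens ht]

def restrict (T : SemistandardYoungTableau μ) (hνμ : ν ≤ μ) : SemistandardYoungTableau ν where
  entry i j := if (i, j) ∈ ν then T i j else 0
  row_weak' {i j₁ j₂} hj h := by
    rw [if_pos (ν.up_left_mem le_rfl hj.le h), if_pos h]
    exact T.row_weak hj (hνμ h)
  col_strict' {i₁ i₂ j} hi h := by
    rw [if_pos (ν.up_left_mem hi.le le_rfl h), if_pos h]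
    exact T.col_strict hi (hνμ h)
  zeros' h := if_neg h

theorem restrict_apply (T : SemistandardYoungTableau μ) (hνμ : ν ≤ μ) (i j : ℕ) :
    T.restrict hνμ i j = if (i, j) ∈ ν then T i j else 0 := rfl

/-- `hstrip` says that `μ / ν` is a horizontal strip. -/
def extendConst (S : SemistandardYoungTableau ν) (hνμ : ν ≤ μ) (m : ℕ)
    (hS : ∀ i j, (i, j) ∈ ν → S i j < m) (hstrip : ∀ i j, (i + 1, j) ∈ μ → (i, j) ∈ ν) :
    SemistandardYoungTableau μ where
  entry i j := if (i, j) ∈ ν then S i j else if (i, j) ∈ μ then m else 0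
  row_weak' {i j₁ j₂} hj h := by
    by_cases h₂ : (i, j₂) ∈ ν
    · rw [if_pos (ν.up_left_mem le_rfl hj.le h₂), if_pos h₂]
      exact S.row_weak hj h₂
    · rw [if_neg h₂, if_pos h]
      split_ifs with h₁
      exacts [(hS _ _ h₁).le, le_rfl, Nat.zero_le m]
  col_strict' {i₁ i₂ j} hi h := by
    obtain ⟨i, rfl⟩ := Nat.exists_eq_add_of_lt hi
    have h₁ : (i₁, j) ∈ ν := ν.up_left_mem (by omega) le_rfl (hstrip _ j h)
    rw [if_pos h₁]
    split_ifs with h₂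
    exacts [S.col_strict hi h₂, hS _ _ h₁]
  zeros' h := by rw [if_neg fun h' => h (hνμ h'), if_neg h]

theorem extendConst_apply (S : SemistandardYoungTableau ν) (hνμ : ν ≤ μ) (m : ℕ)
    (hS : ∀ i j, (i, j) ∈ ν → S i j < m) (hstrip : ∀ i j, (i + 1, j) ∈ μ → (i, j) ∈ ν)
    (i j : ℕ) :
    S.extendConst hνμ m hS hstrip i j
      = if (i, j) ∈ ν then S i j else if (i, j) ∈ μ then m else 0 :=
  rfl

theorem shapeLT_extendConst (S : SemistandardYoungTableau ν) (hνμ : ν ≤ μ) (m : ℕ)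
    (hS : ∀ i j, (i, j) ∈ ν → S i j < m) (hstrip : ∀ i j, (i + 1, j) ∈ μ → (i, j) ∈ ν) :
    (S.extendConst hνμ m hS hstrip).shapeLT m = ν := by
  ext ⟨i, j⟩
  simp only [YoungDiagram.mem_cells, mem_shapeLT, extendConst_apply]
  by_cases h : (i, j) ∈ ν
  · simp [h, hνμ h, hS i j h]
  · simp +contextual [h]

end SemistandardYoungTableau

abbrev BoundedSSYT (μ : YoungDiagram) (m : ℕ) : Type :=
  {T : SemistandardYoungTableau μ // ∀ i j : ℕ, (i, j) ∈ μ → T i j < m}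

namespace BoundedSSYT

open YoungDiagram SemistandardYoungTableau

variable {μ ν : YoungDiagram} {m : ℕ}

instance : Finite (BoundedSSYT μ m) := by
  refine Finite.of_injective (β := μ.cells → Fin m)
    (fun T c => ⟨T.1 c.1.1 c.1.2, T.2 _ _ ((μ.mem_cells _).mp c.2)⟩) fun T T' h => ?_
  ext i j
  by_cases hij : (i, j) ∈ μ
  · simpa using congrFun h ⟨(i, j), (μ.mem_cells _).mpr hij⟩
  · rw [T.1.zeros hij, T'.1.zeros hij]

theorem rowLen_succ_le_rowLen_shapeLT (T : BoundedSSYT μ (m + 1)) (i : ℕ) :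
    μ.rowLen (i + 1) ≤ (T.1.shapeLT m).rowLen i := by
  refine le_of_forall_lt fun j hj => ?_
  rw [← mem_iff_lt_rowLen] at hj ⊢
  have h₁ : T.1 i j < T.1 (i + 1) j := T.1.col_strict i.lt_succ_self hj
  exact mem_shapeLT.mpr ⟨μ.up_left_mem i.le_succ le_rfl hj, by have := T.2 _ _ hj; omega⟩

theorem rowLens_shapeLT_mem_interlacingRowLens (T : BoundedSSYT μ (m + 1)) :
    (fun r : Fin m => (T.1.shapeLT m).rowLen r) ∈ μ.interlacingRowLens m :=
  mem_interlacingRowLens.mpr fun r =>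
    ⟨rowLen_succ_le_rowLen_shapeLT T r, rowLen_mono (T.1.shapeLT_le m) r⟩

def shapeLTEquiv (m : ℕ) (hνμ : ν ≤ μ) (hstrip : ∀ i j, (i + 1, j) ∈ μ → (i, j) ∈ ν) :
    {T : BoundedSSYT μ (m + 1) // T.1.shapeLT m = ν} ≃ BoundedSSYT ν m where
  toFun T := ⟨T.1.1.restrict hνμ, fun i j h => by
    rw [restrict_apply, if_pos h]
    rw [← T.2] at h
    exact (mem_shapeLT.mp h).2⟩
  invFun S := ⟨⟨S.1.extendConst hνμ m S.2 hstrip, fun i j h => by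
    simp only [extendConst_apply]
    split_ifs with h'
    exacts [(S.2 i j h').trans m.lt_succ_self, m.lt_succ_self]⟩,
    shapeLT_extendConst S.1 hνμ m S.2 hstrip⟩
  left_inv T := by
    obtain ⟨⟨T, hT⟩, rfl⟩ := T
    refine Subtype.ext (Subtype.ext (ext fun i j => ?_))
    simp only [extendConst_apply, restrict_apply]
    split_ifs with h₁ h₂
    · rfl
    · have hlt := hT i j h₂
      have hge : ¬ T i j < m := fun h => h₁ (mem_shapeLT.mpr ⟨h₂, h⟩)
      omega
    · exact (T.zeros h₂).symm
  right_inv S := by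
    refine Subtype.ext (ext fun i j => ?_)
    simp only [extendConst_apply, restrict_apply]
    split_ifs with h
    · rfl
    · exact (S.1.zeros h).symm

theorem card_succ (hμ : μ.colLen 0 ≤ m + 1) :
    Nat.card (BoundedSSYT μ (m + 1))
      = ∑ t ∈ μ.interlacingRowLens m, Nat.card (BoundedSSYT (ofFinRowLens t) m) := by
  classical
  rw [Nat.card_eq_sum_card_fiberwise rowLens_shapeLT_mem_interlacingRowLens]
  refine sum_congr rfl fun t ht => Nat.card_congr ?_
  exact (Equiv.subtypeEquivRight fun T =>
    rowLens_shapeLT_eq_iff (antitone_of_mem_interlacingRowLens ht)).trans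
    (shapeLTEquiv m (ofFinRowLens_le ht) fun _ _ => mem_ofFinRowLens_of_succ_mem hμ ht)

theorem card_eq_zero (hm : m < μ.colLen 0) : Nat.card (BoundedSSYT μ m) = 0 := by
  have hmem : (m, 0) ∈ μ := mem_iff_lt_colLen.mpr hm
  have : IsEmpty (BoundedSSYT μ m) := ⟨fun T => (T.1.le_entry hmem).not_gt (T.2 m 0 hmem)⟩
  exact Nat.card_of_isEmpty

theorem card_eq_one (hμ : μ.colLen 0 = 0) : Nat.card (BoundedSSYT μ m) = 1 := by
  have hnot (i j : ℕ) : (i, j) ∉ μ := fun h => by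
    have := mem_iff_lt_colLen.mp (μ.up_left_mem le_rfl (Nat.zero_le j) h)
    omega
  have : Subsingleton (BoundedSSYT μ m) := ⟨fun T T' => Subtype.ext
    (ext fun i j => by rw [T.1.zeros (hnot i j), T'.1.zeros (hnot i j)])⟩
  have : Nonempty (BoundedSSYT μ m) :=
    ⟨⟨highestWeight μ, fun i j h => absurd h (hnot i j)⟩⟩
  exact Nat.card_unique

theorem card_eq_det_binomMatrix :
    ∀ {m : ℕ} {μ : YoungDiagram}, μ.colLen 0 ≤ m →
      (Nat.card (BoundedSSYT μ m) : ℚ) = (binomMatrix (μ.shiftedRowLens m ∘ Fin.rev)).det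
  | 0, μ, hμ => by simp [card_eq_one (Nat.le_zero.mp hμ)]
  | m + 1, μ, hμ => by
    rw [card_succ hμ, Nat.cast_sum, ← sum_det_binomMatrix_interlacingRowLens]
    refine sum_congr rfl fun t ht => ?_
    rw [card_eq_det_binomMatrix (colLen_ofFinRowLens_le t)]
    congr 2
    funext i
    simp only [Function.comp_apply, shiftedRowLens]
    rw [rowLen_ofFinRowLens (antitone_of_mem_interlacingRowLens ht), Fin.val_rev]
    omega

end BoundedSSYT

theorem stmt_14_general (μ : YoungDiagram) (m : ℕ) :
    (Nat.card {T : SemistandardYoungTableau μ // ∀ i j : ℕ, (i, j) ∈ μ → T i j < m} : ℚ)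
      = ∏ c ∈ μ.cells, (((m : ℚ) + (c.2 : ℚ) - (c.1 : ℚ)) / (hookLength μ c.1 c.2 : ℚ)) := by
  rcases lt_or_ge m (μ.colLen 0) with hm | hμ
  · rw [BoundedSSYT.card_eq_zero hm, Nat.cast_zero, eq_comm]
    exact prod_eq_zero ((μ.mem_cells _).mpr (YoungDiagram.mem_iff_lt_colLen.mpr hm)) (by simp)
  · have hfact : ∏ i : Fin m, ((i : ℕ)! : ℚ) = ∏ r : Fin m, ((m - 1 - r : ℕ)! : ℚ) :=
      Fintype.prod_equiv Fin.revPerm _ _ fun r => by simp [Fin.val_rev]; congr 2; omega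
    rw [BoundedSSYT.card_eq_det_binomMatrix hμ, det_binomMatrix, hfact,
      YoungDiagram.prod_cells_eq_prod_rows hμ,
      prod_congr rfl fun r _ => YoungDiagram.prod_content_div_hookLength_row hμ r, prod_div_distrib]
    exact congrArg (· / _) (det_vandermonde_rev fun r => (μ.shiftedRowLens m r : ℚ))

/-- The Schur function specialization `s_λ(1^m)`, i.e. the number of semistandard Young
tableaux of shape `λ` with entries among `{0, …, m−1}`, equals
`∏_{r ∈ λ} (m + cont(r)) / h(r)`. -/
theorem stmt_14 (μ : YoungDiagram) (m : ℕ) (hm : 1 ≤ m) :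
    (Nat.card {T : SemistandardYoungTableau μ // ∀ i j : ℕ, (i, j) ∈ μ → T i j < m} : ℚ)
      = ∏ c ∈ μ.cells, (((m : ℚ) + (c.2 : ℚ) - (c.1 : ℚ)) / (hookLength μ c.1 c.2 : ℚ)) :=
  stmt_14_general μ m
end

section
/- Fix α ∈ [0, 1/2) and let μ_n be a partition of n with at most n^α parts. Let (σ, τ) be uniform on K_{μ_n} × S_n. Letting f be the number of fixed points of the commutator [σ,τ], the probability that n > 2f (hence that S(σ,τ) is a visibility STS) is 1 − O(n²/2^{n/2}). -/
open Finset Equiv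
open scoped commutatorElement

theorem card_fun_agree_ge_le {α β : Type*} [Fintype α] [DecidableEq α]
    [Fintype β] [DecidableEq β] (f : α → β) (m : ℕ) :
    #{g : α → β | m ≤ #{x | g x = f x}} ≤
      2 ^ Fintype.card α * Fintype.card β ^ (Fintype.card α - m) := by
  have hcover : ({g : α → β | m ≤ #{x | g x = f x}} : Finset _) ⊆
      (powersetCard m univ).biUnion fun A => {g : α → β | ∀ x ∈ A, g x = f x} := by
    intro g hg
    obtain ⟨A, hA, hAcard⟩ := exists_subset_card_eq (mem_filter.1 hg).2
    exact mem_biUnion.2 ⟨A, mem_powersetCard.2 ⟨subset_univ A, hAcard⟩,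
      mem_filter.2 ⟨mem_univ g, fun x hx => (mem_filter.1 (hA hx)).2⟩⟩
  have hfix : ∀ A ∈ powersetCard m (univ : Finset α),
      #{g : α → β | ∀ x ∈ A, g x = f x} ≤ Fintype.card β ^ (Fintype.card α - m) := by
    intro A hA
    have hrestrict : Set.InjOn (fun (g : α → β) (x : ↥Aᶜ) => g x)
        ({g : α → β | ∀ x ∈ A, g x = f x} : Finset _) := by
      intro g₁ h₁ g₂ h₂ heq
      funext x
      by_cases hx : x ∈ A
      · rw [(mem_filter.1 h₁).2 x hx, (mem_filter.1 h₂).2 x hx]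
      · exact congrFun heq ⟨x, mem_compl.2 hx⟩
    calc #{g : α → β | ∀ x ∈ A, g x = f x} ≤ #(univ : Finset (↥Aᶜ → β)) :=
          card_le_card_of_injOn _ (fun _ _ => mem_coe.2 (mem_univ _)) hrestrict
      _ = Fintype.card β ^ (Fintype.card α - m) := by
          rw [card_univ, Fintype.card_fun, Fintype.card_coe, card_compl,
            (mem_powersetCard.1 hA).2]
  calc #{g : α → β | m ≤ #{x | g x = f x}}
      ≤ ∑ A ∈ powersetCard m univ, #{g : α → β | ∀ x ∈ A, g x = f x} :=
        (card_le_card hcover).trans card_biUnion_le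
    _ ≤ ∑ A ∈ powersetCard m (univ : Finset α), Fintype.card β ^ (Fintype.card α - m) :=
        sum_le_sum hfix
    _ ≤ 2 ^ Fintype.card α * Fintype.card β ^ (Fintype.card α - m) := by
        rw [sum_const, card_powersetCard, card_univ, smul_eq_mul]
        exact Nat.mul_le_mul_right _ (Nat.choose_le_two_pow _ _)

theorem card_filter_conj_eq_le {G : Type*} [Group G] [Fintype G] [DecidableEq G] (g a : G) :
    #{τ : G | τ * g * τ⁻¹ = a} ≤ Nat.card (Subgroup.centralizer {g}) := by
  rcases eq_empty_or_nonempty ({τ : G | τ * g * τ⁻¹ = a} : Finset G) with hempty | ⟨τ₀, hτ₀⟩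
  · simp [hempty]
  have hmem (τ : G) (hτ : τ ∈ ({τ : G | τ * g * τ⁻¹ = a} : Finset G)) :
      τ₀⁻¹ * τ ∈ Subgroup.centralizer {g} := by
    have hconj : τ * g * τ⁻¹ = τ₀ * g * τ₀⁻¹ :=
      (mem_filter.1 hτ).2.trans (mem_filter.1 hτ₀).2.symm
    rw [Subgroup.mem_centralizer_singleton_iff]
    calc τ₀⁻¹ * τ * g = τ₀⁻¹ * (τ * g * τ⁻¹) * τ := by group
      _ = g * (τ₀⁻¹ * τ) := by rw [hconj]; group
  rw [← Nat.card_eq_finsetCard]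
  exact Nat.card_le_card_of_injective (fun τ => ⟨τ₀⁻¹ * τ, hmem τ τ.2⟩)
    fun τ₁ τ₂ h => Subtype.ext (mul_left_cancel (congrArg Subtype.val h :))

theorem Finset.card_mul_le_card_filter_product_add {A B : Type*} (s : Finset A) (t : Finset B)
    (Q : A → B → Prop) [∀ a b, Decidable (Q a b)] (b : ℕ)
    (hbad : ∀ a ∈ s, #{y ∈ t | ¬ Q a y} ≤ b) :
    #s * #t ≤ #{p ∈ s ×ˢ t | Q p.1 p.2} + #s * b := by
  have hfibres : #{p ∈ s ×ˢ t | Q p.1 p.2} = ∑ a ∈ s, #{y ∈ t | Q a y} := by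
    simp only [card_filter, sum_product]
  calc #s * #t = ∑ a ∈ s, (#{y ∈ t | Q a y} + #{y ∈ t | ¬ Q a y}) := by
        rw [sum_congr rfl fun a _ => card_filter_add_card_filter_not (Q a), sum_const, smul_eq_mul]
    _ ≤ ∑ a ∈ s, (#{y ∈ t | Q a y} + b) :=
        sum_le_sum fun a ha => Nat.add_le_add_left (hbad a ha) _
    _ = #{p ∈ s ×ˢ t | Q p.1 p.2} + #s * b := by
        rw [sum_add_distrib, sum_const, smul_eq_mul, hfibres]

namespace Equiv.Perm

variable {α : Type*} [Fintype α] [DecidableEq α]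

theorem partition_surjective :
    Function.Surjective (partition : Perm α → (Fintype.card α).Partition) := by
  intro p
  set ν := p.parts.filter (2 ≤ ·)
  set ones := p.parts.filter (¬ 2 ≤ ·)
  have hsplit : ν + ones = p.parts := Multiset.filter_add_not _ _
  have hones : ones = Multiset.replicate (Multiset.card ones) 1 :=
    Multiset.eq_replicate_card.2 fun a ha => by
      have := p.parts_pos (Multiset.mem_of_mem_filter ha)
      have := (Multiset.mem_filter.1 ha).2
      omega
  have hsum : ν.sum + Multiset.card ones = Fintype.card α := by
    rw [← p.parts_sum, ← hsplit, Multiset.sum_add, hones]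
    simp
  obtain ⟨σ, hσ⟩ := (exists_with_cycleType_iff α (m := ν)).2
    ⟨by omega, fun a ha => (Multiset.mem_filter.1 ha).2⟩
  refine ⟨σ, Nat.Partition.ext ?_⟩
  rw [parts_partition, ← sum_cycleType, hσ, ← hsplit, hones,
    show Fintype.card α - ν.sum = Multiset.card ones by omega]

theorem partition_inv (σ : Perm α) : σ⁻¹.partition = σ.partition :=
  partition_eq_of_isConj.1 (isConj_iff_cycleType_eq.2 (cycleType_inv σ))

theorem card_centralizer_le (σ : Perm α) :
    Nat.card (Subgroup.centralizer {σ}) ≤ Fintype.card α ^ Multiset.card σ.partition.parts := by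
  obtain ⟨a⟩ := Basis.nonempty σ
  let restrict (k : Subgroup.centralizer {σ}) :
      (σ.cycleFactorsFinset → α) × (Function.fixedPoints σ → α) :=
    (fun c => (k : Perm α) (a c), fun x => (k : Perm α) x)
  have hinj : Function.Injective restrict := by
    intro k₁ k₂ h
    simp only [restrict, Prod.mk.injEq, funext_iff] at h
    have hcomm (k : Subgroup.centralizer {σ}) (i : ℤ) (x : α) :
        (k : Perm α) ((σ ^ i) x) = (σ ^ i) ((k : Perm α) x) :=
      have hk : Commute (k : Perm α) σ := Subgroup.mem_centralizer_singleton_iff.1 k.2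
      congrFun (congrArg DFunLike.coe (hk.zpow_right i).eq) x
    ext x
    rcases a.mem_fixedPoints_or_exists_zpow_eq x with hx | ⟨c, -, i, rfl⟩
    · exact h.2 ⟨x, hx⟩
    · rw [hcomm k₁, hcomm k₂, h.1 c]
  calc Nat.card (Subgroup.centralizer {σ})
      ≤ Nat.card ((σ.cycleFactorsFinset → α) × (Function.fixedPoints σ → α)) :=
        Nat.card_le_card_of_injective restrict hinj
    _ = Fintype.card α ^ Multiset.card σ.partition.parts := by
        rw [Nat.card_eq_fintype_card, Fintype.card_prod, Fintype.card_fun, Fintype.card_fun,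
          Fintype.card_coe, card_fixedPoints, ← pow_add, parts_partition,
          Multiset.card_add, Multiset.card_replicate, sum_cycleType, cycleType,
          Multiset.card_map]
        rfl

theorem card_agree_ge_le (π : Perm α) (m : ℕ) :
    #{ρ : Perm α | m ≤ #{x | ρ x = π x}} ≤
      2 ^ Fintype.card α * Fintype.card α ^ (Fintype.card α - m) :=
  (card_le_card_of_injOn DFunLike.coe (fun ρ hρ => by simpa using hρ)
    DFunLike.coe_injective.injOn).trans (card_fun_agree_ge_le π m)

theorem card_commutator_fixedPoints_ge_le (σ : Perm α) (m : ℕ) :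
    #{τ : Perm α | m ≤ #{x | ⁅σ, τ⁆ x = x}} ≤ Fintype.card α ^ Multiset.card σ.partition.parts *
      (2 ^ Fintype.card α * Fintype.card α ^ (Fintype.card α - m)) := by
  set T : Finset (Perm α) := {τ | m ≤ #{x | ⁅σ, τ⁆ x = x}}
  have hagree : T.image (fun τ => τ * σ⁻¹ * τ⁻¹) ⊆
      ({ρ : Perm α | m ≤ #{x | ρ x = σ⁻¹ x}} : Finset _) := by
    simp only [subset_iff, mem_image, mem_filter, mem_univ, true_and, T]
    rintro _ ⟨τ, hτ, rfl⟩
    convert hτ using 3 with x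
    simp only [commutatorElement_def, mul_apply]
    exact eq_inv_iff_eq
  calc #T ≤ Nat.card (Subgroup.centralizer {σ⁻¹}) * #(T.image fun τ => τ * σ⁻¹ * τ⁻¹) :=
        card_le_mul_card_image T _ fun ρ _ =>
          (card_le_card (filter_subset_filter _ (subset_univ T))).trans
            (card_filter_conj_eq_le σ⁻¹ ρ)
    _ ≤ Fintype.card α ^ Multiset.card σ.partition.parts *
          (2 ^ Fintype.card α * Fintype.card α ^ (Fintype.card α - m)) := by
        gcongr
        · simpa only [partition_inv] using card_centralizer_le σ⁻¹
        · exact (card_le_card hagree).trans (card_agree_ge_le σ⁻¹ m)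

end Equiv.Perm

theorem Nat.pow_self_le_three_pow_mul_factorial (n : ℕ) : n ^ n ≤ 3 ^ n * n.factorial := by
  have hexp : Real.exp n ≤ 3 ^ n := by
    rw [← mul_one (n : ℝ), Real.exp_nat_mul]
    exact pow_le_pow_left₀ (Real.exp_pos 1).le (Real.exp_one_lt_d9.le.trans (by norm_num)) n
  have h := (Real.pow_div_factorial_le_exp (n : ℝ) n.cast_nonneg n).trans hexp
  rw [div_le_iff₀ (by positivity)] at h
  exact_mod_cast h

-- `n ^ n ≤ 3 ^ n n!` reduces this to `n ^ (2c) 72 ^ n ≤ n ^ n`, with `72 = 2 ^ 3 * 3 ^ 2`.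
theorem pow_mul_two_pow_mul_pow_sq_mul_two_pow_le (n c : ℕ) (hn : 72 ^ 2 ≤ n) (hc : c ^ 2 ≤ n) :
    (n ^ c * (2 ^ n * n ^ (n - (n + 1) / 2))) ^ 2 * 2 ^ n ≤ (n ^ 2 * n.factorial) ^ 2 := by
  have hk : 2 * (n - (n + 1) / 2) ≤ n := by omega
  have h4c : 4 * c ≤ n := by nlinarith
  have hpos : 0 < n := by omega
  have h72 : (2 ^ n) ^ 3 * 9 ^ n = 72 ^ n := by
    rw [← pow_mul, mul_comm n 3, pow_mul, ← mul_pow]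
    norm_num
  have hsmall : n ^ (2 * c) * 72 ^ n ≤ n ^ n := by
    rw [← Nat.pow_le_pow_iff_left two_ne_zero]
    calc (n ^ (2 * c) * 72 ^ n) ^ 2 = n ^ (4 * c) * (72 ^ 2) ^ n := by
          rw [mul_pow, ← pow_mul, ← pow_mul, ← pow_mul, mul_comm n 2]
          ring
      _ ≤ n ^ n * n ^ n :=
          Nat.mul_le_mul (Nat.pow_le_pow_right hpos h4c) (Nat.pow_le_pow_left hn n)
      _ = (n ^ n) ^ 2 := by ring
  refine Nat.le_of_mul_le_mul_left ?_ (pow_pos (by norm_num : 0 < 9) n)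
  calc 9 ^ n * ((n ^ c * (2 ^ n * n ^ (n - (n + 1) / 2))) ^ 2 * 2 ^ n)
      = n ^ (2 * c) * 72 ^ n * n ^ (2 * (n - (n + 1) / 2)) := by rw [← h72]; ring
    _ ≤ n ^ n * n ^ n := Nat.mul_le_mul hsmall (Nat.pow_le_pow_right hpos hk)
    _ ≤ n ^ 4 * (3 ^ n * n.factorial) ^ 2 := by
        rw [← sq]
        exact (Nat.pow_le_pow_left (Nat.pow_self_le_three_pow_mul_factorial n) 2).trans
          (Nat.le_mul_of_pos_left _ (by positivity))
    _ = 9 ^ n * (n ^ 2 * n.factorial) ^ 2 := by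
        rw [show (9 : ℕ) = 3 ^ 2 by norm_num, ← pow_mul, mul_comm 2 n, pow_mul]
        ring

theorem pow_mul_two_pow_mul_pow_div_factorial_le (n c : ℕ) (hn : 72 ^ 2 ≤ n) (hc : c ^ 2 ≤ n) :
    ((n ^ c * (2 ^ n * n ^ (n - (n + 1) / 2)) : ℕ) : ℝ) / n.factorial
      ≤ (n : ℝ) ^ 2 / 2 ^ ((n : ℝ) / 2) := by
  rw [div_le_div_iff₀ (by positivity) (by positivity),
    ← pow_le_pow_iff_left₀ (by positivity) (by positivity) two_ne_zero, mul_pow,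
    ← Real.rpow_natCast (2 ^ _), ← Real.rpow_mul zero_le_two, Nat.cast_two,
    div_mul_cancel₀ _ two_ne_zero, Real.rpow_natCast]
  exact_mod_cast pow_mul_two_pow_mul_pow_sq_mul_two_pow_le n c hn hc

theorem sq_le_of_cast_le_rpow {c n : ℕ} {α : ℝ} (hα : α < 1 / 2) (hn : 1 ≤ n)
    (hc : (c : ℝ) ≤ (n : ℝ) ^ α) : c ^ 2 ≤ n := by
  have hsqrt : (c : ℝ) ≤ √n := by
    rw [Real.sqrt_eq_rpow]
    exact hc.trans (Real.rpow_le_rpow_of_exponent_le (Nat.one_le_cast.2 hn) hα.le)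
  exact_mod_cast (Real.le_sqrt c.cast_nonneg n.cast_nonneg).1 hsqrt

theorem one_sub_two_pow_mul_div_nonpos {n N : ℕ} (hn : 1 ≤ n) (hnN : n ≤ N) :
    1 - (2 : ℝ) ^ N * n ^ 2 / 2 ^ ((n : ℝ) / 2) ≤ 0 := by
  rw [sub_nonpos, le_div_iff₀ (by positivity), one_mul, ← Real.rpow_natCast 2 N]
  calc (2 : ℝ) ^ ((n : ℝ) / 2) ≤ 2 ^ (N : ℝ) :=
        Real.rpow_le_rpow_of_exponent_le one_le_two (by
          have : (n : ℝ) ≤ N := Nat.cast_le.2 hnN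
          linarith [n.cast_nonneg (α := ℝ)])
    _ ≤ 2 ^ (N : ℝ) * n ^ 2 :=
        le_mul_of_one_le_right (by positivity) (one_le_pow₀ (Nat.one_le_cast.2 hn))

theorem fullCycleType_eq_parts_partition {n : ℕ} (σ : Perm (Fin n)) :
    fullCycleType σ = σ.partition.parts := by
  rw [fullCycleType, Perm.parts_partition, Fintype.card_fin, Perm.sum_cycleType]

theorem exists_fullCycleType_eq {n : ℕ} {μ : Multiset ℕ} (hsum : μ.sum = n)
    (hpos : ∀ k ∈ μ, 1 ≤ k) : ∃ σ : Perm (Fin n), fullCycleType σ = μ := by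
  obtain ⟨σ, hσ⟩ := Perm.partition_surjective
    (⟨μ, fun hk => hpos _ hk, by rw [hsum, Fintype.card_fin]⟩ :
      (Fintype.card (Fin n)).Partition)
  exact ⟨σ, by rw [fullCycleType_eq_parts_partition, hσ]⟩

theorem one_sub_le_card_commutator_fixedPoints_lt_div {n : ℕ} (μ : Multiset ℕ)
    (hK : 0 < Nat.card {σ : Perm (Fin n) // fullCycleType σ = μ}) :
    1 - ((n ^ Multiset.card μ * (2 ^ n * n ^ (n - (n + 1) / 2)) : ℕ) : ℝ) / n.factorial ≤
      (Nat.card {p : Perm (Fin n) × Perm (Fin n) //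
            fullCycleType p.1 = μ ∧
            n > 2 * Nat.card {x : Fin n // (p.1 * p.2 * p.1⁻¹ * p.2⁻¹) x = x}} : ℝ)
          / ((Nat.card {σ : Perm (Fin n) // fullCycleType σ = μ} : ℝ) * (n.factorial : ℝ)) := by
  set S : Finset (Perm (Fin n)) := {σ | fullCycleType σ = μ}
  set b := n ^ Multiset.card μ * (2 ^ n * n ^ (n - (n + 1) / 2))
  have hbad (σ : Perm (Fin n)) (hσ : σ ∈ S) :
      #{τ : Perm (Fin n) | ¬ n > 2 * #{x | ⁅σ, τ⁆ x = x}} ≤ b := by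
    have hμ : σ.partition.parts = μ := by
      rw [← fullCycleType_eq_parts_partition, (mem_filter.1 hσ).2]
    calc #{τ : Perm (Fin n) | ¬ n > 2 * #{x | ⁅σ, τ⁆ x = x}}
        = #{τ : Perm (Fin n) | (n + 1) / 2 ≤ #{x | ⁅σ, τ⁆ x = x}} :=
          congrArg card (filter_congr fun τ _ => by omega)
      _ ≤ b := by simpa [hμ] using Perm.card_commutator_fixedPoints_ge_le σ ((n + 1) / 2)
  have hcount := Finset.card_mul_le_card_filter_product_add S univ _ b hbad
  have hS : Nat.card {σ : Perm (Fin n) // fullCycleType σ = μ} = #S := by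
    rw [Nat.card_eq_fintype_card, Fintype.card_subtype]
  have hgood : Nat.card {p : Perm (Fin n) × Perm (Fin n) //
      fullCycleType p.1 = μ ∧
      n > 2 * Nat.card {x : Fin n // (p.1 * p.2 * p.1⁻¹ * p.2⁻¹) x = x}} =
        #{p ∈ S ×ˢ (univ : Finset (Perm (Fin n))) | n > 2 * #{x | ⁅p.1, p.2⁆ x = x}} := by
    rw [Nat.card_eq_fintype_card, Fintype.card_subtype]
    congr 1
    ext p
    simp only [mem_filter, mem_univ, true_and, mem_product, and_true, S,
      Nat.card_eq_fintype_card, Fintype.card_subtype]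
    rfl
  rw [card_univ, Fintype.card_perm, Fintype.card_fin] at hcount
  have hSpos : (0 : ℝ) < #S := by rw [← hS]; exact_mod_cast hK
  have hfact : (0 : ℝ) < n.factorial := by exact_mod_cast n.factorial_pos
  have hcancel : (b : ℝ) / n.factorial * (#S * n.factorial) = #S * b := by
    field_simp
  rw [hS, hgood, le_div_iff₀ (by positivity), sub_mul, one_mul, hcancel]
  have hcount_real : ((#S * n.factorial : ℕ) : ℝ) ≤ ((_ + #S * b : ℕ) : ℝ) :=
    Nat.cast_le.2 hcount
  push_cast at hcount_real
  linarith

theorem stmt_16_general (α : ℝ) (hα1 : α < 1 / 2) :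
    ∃ C : ℝ, 0 < C ∧ ∀ n : ℕ, 1 ≤ n → ∀ μ : Multiset ℕ,
      μ.sum = n → (∀ k ∈ μ, 1 ≤ k) → (Multiset.card μ : ℝ) ≤ (n : ℝ) ^ α →
      (Nat.card {p : Equiv.Perm (Fin n) × Equiv.Perm (Fin n) //
            fullCycleType p.1 = μ ∧
            n > 2 * Nat.card {x : Fin n // (p.1 * p.2 * p.1⁻¹ * p.2⁻¹) x = x}} : ℝ)
          / ((Nat.card {σ : Equiv.Perm (Fin n) // fullCycleType σ = μ} : ℝ)
              * (n.factorial : ℝ))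
        ≥ 1 - C * (n : ℝ) ^ 2 / (2 : ℝ) ^ ((n : ℝ) / 2) := by
  refine ⟨2 ^ (72 ^ 2), by positivity, fun n hn μ hsum hpos hcard => ?_⟩
  obtain ⟨σ, hσ⟩ := exists_fullCycleType_eq hsum hpos
  have hK : 0 < Nat.card {σ : Perm (Fin n) // fullCycleType σ = μ} :=
    have : Nonempty {σ : Perm (Fin n) // fullCycleType σ = μ} := ⟨⟨σ, hσ⟩⟩
    Nat.card_pos
  rw [ge_iff_le]
  rcases lt_or_ge n (72 ^ 2) with hsmall | hlarge
  · exact (one_sub_two_pow_mul_div_nonpos hn hsmall.le).trans (by positivity)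
  refine le_trans ?_ (one_sub_le_card_commutator_fixedPoints_lt_div μ hK)
  gcongr 1 - ?_
  calc _ ≤ (n : ℝ) ^ 2 / 2 ^ ((n : ℝ) / 2) :=
        pow_mul_two_pow_mul_pow_div_factorial_le n _ hlarge (sq_le_of_cast_le_rpow hα1 hn hcard)
    _ ≤ 2 ^ (72 ^ 2) * (n : ℝ) ^ 2 / 2 ^ ((n : ℝ) / 2) := by
        gcongr
        exact le_mul_of_one_le_left (by positivity) (one_le_pow₀ one_le_two)

/-- Fix `α ∈ [0, 1/2)`. If `μ_n ⊢ n` has at most `n^α` parts and `(σ, τ)` is uniform on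
`K_{μ_n} × S_n`, and `f` denotes the number of fixed points of the commutator `[σ,τ]`,
then the probability that `n > 2f` (hence that `S(σ,τ)` is a visibility STS) is
`1 − O(n²/2^{n/2})`. -/
theorem stmt_16 (α : ℝ) (hα0 : 0 ≤ α) (hα1 : α < 1 / 2) :
    ∃ C : ℝ, 0 < C ∧ ∀ n : ℕ, 1 ≤ n → ∀ μ : Multiset ℕ,
      μ.sum = n → (∀ k ∈ μ, 1 ≤ k) → (Multiset.card μ : ℝ) ≤ (n : ℝ) ^ α →
      (Nat.card {p : Equiv.Perm (Fin n) × Equiv.Perm (Fin n) //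
            fullCycleType p.1 = μ ∧
            n > 2 * Nat.card {x : Fin n // (p.1 * p.2 * p.1⁻¹ * p.2⁻¹) x = x}} : ℝ)
          / ((Nat.card {σ : Equiv.Perm (Fin n) // fullCycleType σ = μ} : ℝ)
              * (n.factorial : ℝ))
        ≥ 1 - C * (n : ℝ) ^ 2 / (2 : ℝ) ^ ((n : ℝ) / 2) :=
  stmt_16_general α hα1
end
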